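/- arXiv:1210.2621 — 4 statements merged into one kernel-verified Lean document; each statement's English description precedes it below -/
import Mathlib

section
/- For all integers k, ℓ with 5 ≤ k ≤ ℓ and every integer n ≥ 2ℓ(k−1), there exists a (k,ℓ)-bicrucial permutation of length n. -/
/-- `π` (viewed as a 1-indexed function `ℕ → ℕ`) is a permutation of length `n`,
i.e. the values `π 1, π 2, …, π n` contain each of `1,…,n` exactly once. -/
def IsPermutation (n : ℕ) (π : ℕ → ℕ) : Prop :=
  (∀ i, 1 ≤ i → i ≤ n → 1 ≤ π i ∧ π i ≤ n) ∧
  (∀ i j, 1 ≤ i → i ≤ n → 1 ≤ j → j ≤ n → π i = π j → i = j) ∧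
  (∀ v, 1 ≤ v → v ≤ n → ∃ i, 1 ≤ i ∧ i ≤ n ∧ π i = v)

/-- `π` (of length `n`) has a strictly increasing arithmetic subsequence of length `k`,
i.e. an arithmetic occurrence of the pattern `1 2 … k`. -/
def HasArithInc (n k : ℕ) (π : ℕ → ℕ) : Prop :=
  ∃ i d : ℕ, 1 ≤ i ∧ 1 ≤ d ∧ i + (k - 1) * d ≤ n ∧
    ∀ j, j + 1 < k → π (i + j * d) < π (i + (j + 1) * d)

/-- `π` (of length `n`) has a strictly decreasing arithmetic subsequence of length `k`,
i.e. an arithmetic occurrence of the pattern `k (k-1) … 1`. -/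
def HasArithDec (n k : ℕ) (π : ℕ → ℕ) : Prop :=
  ∃ i d : ℕ, 1 ≤ i ∧ 1 ≤ d ∧ i + (k - 1) * d ≤ n ∧
    ∀ j, j + 1 < k → π (i + j * d) > π (i + (j + 1) * d)

/-- `π` (of length `n`) is `(k,l)`-anti-monotone: it avoids arithmetically
the patterns `1 2 … k` and `l (l-1) … 1`. -/
def AntiMonotone (n k l : ℕ) (π : ℕ → ℕ) : Prop :=
  ¬ HasArithInc n k π ∧ ¬ HasArithDec n l π

/-- The extension of `π` (of length `n`) to the right by `x`: every entry `≥ x` is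
increased by `1` and `x` is appended at the right end (position `n+1`). -/
def ExtendRight (n : ℕ) (π : ℕ → ℕ) (x : ℕ) : ℕ → ℕ :=
  fun i => if i = n + 1 then x else if x ≤ π i then π i + 1 else π i

/-- The extension of `π` to the left by `x`: every entry `≥ x` is increased by `1`
and `x` is prepended at the left end (position `1`). -/
def ExtendLeft (π : ℕ → ℕ) (x : ℕ) : ℕ → ℕ :=
  fun i => if i = 1 then x else if x ≤ π (i - 1) then π (i - 1) + 1 else π (i - 1)

/-- `π` is a `(k,l)`-crucial permutation of length `n`. -/
def Crucial (n k l : ℕ) (π : ℕ → ℕ) : Prop :=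
  IsPermutation n π ∧ AntiMonotone n k l π ∧
  ∀ x, 1 ≤ x → x ≤ n + 1 → ¬ AntiMonotone (n + 1) k l (ExtendRight n π x)

/-- `π` is a `(k,l)`-bicrucial permutation of length `n`. -/
def Bicrucial (n k l : ℕ) (π : ℕ → ℕ) : Prop :=
  Crucial n k l π ∧
  ∀ x, 1 ≤ x → x ≤ n + 1 → ¬ AntiMonotone (n + 1) k l (ExtendLeft π x)

namespace BC

def g : ℕ → ℕ → ℕ
  | 0, _ => 0
  | w+1, p => p % 2 * 2^w + g w (p / 2)

lemma g_succ (w p : ℕ) : g (w+1) p = p % 2 * 2^w + g w (p / 2) := rfl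

lemma g_lt (w p : ℕ) : g w p < 2^w := by
  induction w generalizing p with
  | zero => simp [g]
  | succ w ih =>
    rw [g_succ]
    have h3 := ih (p / 2)
    have h4 : (2:ℕ)^(w+1) = 2^w + 2^w := by ring
    rcases Nat.mod_two_eq_zero_or_one p with h | h <;> rw [h] <;> simp <;> omega

lemma g_inj (w : ℕ) : ∀ p q : ℕ, p < 2^w → q < 2^w → g w p = g w q → p = q := by
  induction w with
  | zero => intro p q hp hq _; interval_cases p <;> interval_cases q <;> rfl
  | succ w ih =>
    intro p q hp hq h
    rw [g_succ, g_succ] at h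
    have hgp := g_lt w (p / 2)
    have hgq := g_lt w (q / 2)
    have hpow : (2:ℕ)^(w+1) = 2^w + 2^w := by ring
    have hpw : p / 2 < 2^w := by omega
    have hqw : q / 2 < 2^w := by omega
    have hmod : p % 2 = q % 2 ∧ g w (p / 2) = g w (q / 2) := by
      rcases Nat.mod_two_eq_zero_or_one p with h1 | h1 <;>
        rcases Nat.mod_two_eq_zero_or_one q with h2 | h2 <;>
          rw [h1, h2] at h <;> simp at h <;> omega
    have := ih (p / 2) (q / 2) hpw hqw hmod.2
    omega

lemma g_middle (w : ℕ) : ∀ q d : ℕ, 0 < d → q + 2*d < 2^w →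
    (g w q < g w (q+d) ↔ g w (q+2*d) < g w (q+d)) := by
  induction w with
  | zero => intro q d hd h; simp at h; omega
  | succ w ih =>
    intro q d hd h
    have hpow : (2:ℕ)^(w+1) = 2^w + 2^w := by ring
    rw [g_succ, g_succ, g_succ]
    rcases Nat.even_or_odd d with ⟨e, he⟩ | ⟨e, he⟩
    · -- d = e + e
      subst he
      have he0 : 0 < e := by omega
      have h1 : (q + (e+e)) % 2 = q % 2 := by omega
      have h2 : (q + 2*(e+e)) % 2 = q % 2 := by omega
      have h3 : (q + (e+e)) / 2 = q / 2 + e := by omega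
      have h4 : (q + 2*(e+e)) / 2 = q / 2 + 2*e := by omega
      have hlt : q / 2 + 2*e < 2^w := by omega
      have key := ih (q / 2) e he0 hlt
      rw [h1, h2, h3, h4]
      simp only [Nat.add_lt_add_iff_left]
      exact key
    · -- d = 2e+1
      have hdodd : d % 2 = 1 := by omega
      have g1 := g_lt w (q / 2)
      have g2 := g_lt w ((q+d) / 2)
      have g3 := g_lt w ((q+2*d) / 2)
      rcases Nat.mod_two_eq_zero_or_one q with e1 | e1
      · have e2 : (q+d) % 2 = 1 := by omega
        have e3 : (q+2*d) % 2 = 0 := by omega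
        rw [e1, e2, e3]; simp; omega
      · have e2 : (q+d) % 2 = 0 := by omega
        have e3 : (q+2*d) % 2 = 1 := by omega
        rw [e1, e2, e3]; simp; omega


-- class of a position: 0 = D (prefix), 3 = I (left plant), 4 = T (suffix),
-- 1 = S (right plant), 2 = M (middle).
open Classical in
noncomputable def cls (k l n p : ℕ) : ℕ :=
  if p + 1 ≤ l then 0
  else if ∃ j ∈ Finset.Icc 1 (k-1), p = j * l then 3
  else if n + 2 ≤ p + l then 4
  else if ∃ j ∈ Finset.Icc 1 (k-1), p + j * l = n + 1 then 1
  else 2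

noncomputable def MS (k l n : ℕ) : Finset ℕ :=
  (Finset.Icc 1 n).filter (fun p => cls k l n p = 2)

noncomputable def rk (k l n p : ℕ) : ℕ :=
  ((MS k l n).filter (fun q => g n q < g n p)).card

noncomputable def pf (k l n : ℕ) (p : ℕ) : ℕ :=
  if cls k l n p = 0 then l - p
  else if cls k l n p = 3 then n + 2 - (k + l) + p / l
  else if cls k l n p = 4 then n - l + 2 + (n - p)
  else if cls k l n p = 1 then l + k - 1 - (n + 1 - p) / l
  else l + k - 1 + rk k l n p

section Main

variable {k l n p : ℕ}

lemma basics (hk : 5 ≤ k) (hkl : k ≤ l) (hn : 2*l*(k-1) ≤ n) :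
    5 ≤ l ∧ 4*l ≤ (k-1)*l ∧ (k-1)*l + (k-1)*l ≤ n ∧ k*l = (k-1)*l + l := by
  refine ⟨by omega, Nat.mul_le_mul_right l (by omega), ?_, ?_⟩
  · have : 2*l*(k-1) = (k-1)*l + (k-1)*l := by ring
    omega
  · have hk1 : k = (k-1) + 1 := by omega
    calc k * l = ((k-1)+1) * l := by rw [← hk1]
    _ = (k-1)*l + l := by ring

lemma cls_le_four (k l n p : ℕ) : cls k l n p ≤ 4 := by
  unfold cls; split_ifs <;> omega

lemma cls_zero_of (h : p + 1 ≤ l) : cls k l n p = 0 := by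
  unfold cls; rw [if_pos h]

lemma cls_zero_dat (h : cls k l n p = 0) : p + 1 ≤ l := by
  unfold cls at h; split_ifs at h with h1 h2 h3 h4 <;> first | assumption | omega

lemma cls_three_of (hk : 5 ≤ k) (hkl : k ≤ l) (hn : 2*l*(k-1) ≤ n)
    {j : ℕ} (hj1 : 1 ≤ j) (hjk : j ≤ k-1) (hp : p = j * l) : cls k l n p = 3 := by
  obtain ⟨hl, hP, hn2, hklP⟩ := basics hk hkl hn
  have h1 : l ≤ j * l := Nat.le_mul_of_pos_left l hj1
  unfold cls
  rw [if_neg (by omega), if_pos ⟨j, Finset.mem_Icc.mpr ⟨hj1, hjk⟩, hp⟩]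

lemma cls_three_dat (h : cls k l n p = 3) : ∃ j, 1 ≤ j ∧ j ≤ k-1 ∧ p = j * l := by
  unfold cls at h
  split_ifs at h with h1 h2 h3 h4 <;> try omega
  obtain ⟨j, hj, hpj⟩ := h2
  exact ⟨j, (Finset.mem_Icc.mp hj).1, (Finset.mem_Icc.mp hj).2, hpj⟩

lemma cls_four_of (hk : 5 ≤ k) (hkl : k ≤ l) (hn : 2*l*(k-1) ≤ n)
    (hpn : p ≤ n) (h : n + 2 ≤ p + l) : cls k l n p = 4 := by
  obtain ⟨hl, hP, hn2, hklP⟩ := basics hk hkl hn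
  unfold cls
  rw [if_neg (by omega), if_neg, if_pos h]
  rintro ⟨j, hj, rfl⟩
  obtain ⟨hj1, hjk⟩ := Finset.mem_Icc.mp hj
  have h2 : j * l ≤ (k-1) * l := Nat.mul_le_mul_right l hjk
  omega

lemma cls_four_dat (h : cls k l n p = 4) : n + 2 ≤ p + l := by
  unfold cls at h; split_ifs at h with h1 h2 h3 h4 <;> first | assumption | omega

lemma cls_one_of (hk : 5 ≤ k) (hkl : k ≤ l) (hn : 2*l*(k-1) ≤ n)
    {j : ℕ} (hj1 : 1 ≤ j) (hjk : j ≤ k-1) (hp : p + j * l = n + 1) : cls k l n p = 1 := by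
  obtain ⟨hl, hP, hn2, hklP⟩ := basics hk hkl hn
  have h1 : l ≤ j * l := Nat.le_mul_of_pos_left l hj1
  have h2 : j * l ≤ (k-1) * l := Nat.mul_le_mul_right l hjk
  unfold cls
  rw [if_neg (by omega), if_neg, if_neg (by omega),
    if_pos ⟨j, Finset.mem_Icc.mpr ⟨hj1, hjk⟩, hp⟩]
  rintro ⟨j', hj', rfl⟩
  obtain ⟨hj1', hjk'⟩ := Finset.mem_Icc.mp hj'
  have h3 : j' * l ≤ (k-1) * l := Nat.mul_le_mul_right l hjk'
  omega

lemma cls_one_dat (h : cls k l n p = 1) : ∃ j, 1 ≤ j ∧ j ≤ k-1 ∧ p + j * l = n + 1 := by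
  unfold cls at h
  split_ifs at h with h1 h2 h3 h4 <;> try omega
  obtain ⟨j, hj, hpj⟩ := h4
  exact ⟨j, (Finset.mem_Icc.mp hj).1, (Finset.mem_Icc.mp hj).2, hpj⟩

lemma cls_two_dat (h : cls k l n p = 2) :
    l ≤ p ∧ p + l ≤ n + 1 ∧ (¬ ∃ j ∈ Finset.Icc 1 (k-1), p = j * l) ∧
      (¬ ∃ j ∈ Finset.Icc 1 (k-1), p + j * l = n + 1) := by
  unfold cls at h
  split_ifs at h with h1 h2 h3 h4 <;> try omega
  exact ⟨by omega, by omega, h2, h4⟩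


lemma pf_of0 (h : cls k l n p = 0) : pf k l n p = l - p := by simp [pf, h]
lemma pf_of3 (h : cls k l n p = 3) : pf k l n p = n + 2 - (k + l) + p / l := by simp [pf, h]
lemma pf_of4 (h : cls k l n p = 4) : pf k l n p = n - l + 2 + (n - p) := by simp [pf, h]
lemma pf_of1 (h : cls k l n p = 1) : pf k l n p = l + k - 1 - (n + 1 - p) / l := by simp [pf, h]
lemma pf_of2 (h : cls k l n p = 2) : pf k l n p = l + k - 1 + rk k l n p := by simp [pf, h]

lemma pf_S (hk : 5 ≤ k) (hkl : k ≤ l) (hn : 2*l*(k-1) ≤ n)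
    {j : ℕ} (hj1 : 1 ≤ j) (hjk : j ≤ k-1) (hp : p + j * l = n + 1) :
    pf k l n p = l + k - 1 - j := by
  rw [pf_of1 (cls_one_of hk hkl hn hj1 hjk hp)]
  have h1 : n + 1 - p = j * l := by omega
  rw [h1, Nat.mul_div_cancel]
  omega

lemma pf_I (hk : 5 ≤ k) (hkl : k ≤ l) (hn : 2*l*(k-1) ≤ n)
    {j : ℕ} (hj1 : 1 ≤ j) (hjk : j ≤ k-1) (hp : p = j * l) :
    pf k l n p = n + 2 - (k + l) + j := by
  rw [pf_of3 (cls_three_of hk hkl hn hj1 hjk hp), hp, Nat.mul_div_cancel]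
  omega

lemma mem_MS (h2 : cls k l n p = 2) (hp : 1 ≤ p) (hpn : p ≤ n) : p ∈ MS k l n :=
  Finset.mem_filter.mpr ⟨Finset.mem_Icc.mpr ⟨hp, hpn⟩, h2⟩

lemma MS_dat (h : p ∈ MS k l n) : 1 ≤ p ∧ p ≤ n ∧ cls k l n p = 2 := by
  obtain ⟨h1, h2⟩ := Finset.mem_filter.mp h
  obtain ⟨h3, h4⟩ := Finset.mem_Icc.mp h1
  exact ⟨h3, h4, h2⟩

lemma rk_lt_card (hp : p ∈ MS k l n) : rk k l n p < (MS k l n).card := by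
  apply Finset.card_lt_card
  constructor
  · exact Finset.filter_subset _ _
  · intro hsub
    have := hsub hp
    simp at this

lemma rk_strict {q : ℕ} (hp : p ∈ MS k l n) (h : g n p < g n q) :
    rk k l n p < rk k l n q := by
  apply Finset.card_lt_card
  constructor
  · intro x hx
    obtain ⟨hx1, hx2⟩ := Finset.mem_filter.mp hx
    exact Finset.mem_filter.mpr ⟨hx1, hx2.trans h⟩
  · intro hsub
    have hmem : p ∈ (MS k l n).filter (fun q' => g n q' < g n q) :=
      Finset.mem_filter.mpr ⟨hp, h⟩
    have := hsub hmem
    simp at this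

lemma g_lt_of_pf_lt {q : ℕ} (hp : p ∈ MS k l n) (hq : q ∈ MS k l n)
    (h : pf k l n p < pf k l n q) : g n p < g n q := by
  obtain ⟨hp1, hpn, hp2⟩ := MS_dat hp
  obtain ⟨hq1, hqn, hq2⟩ := MS_dat hq
  rw [pf_of2 hp2, pf_of2 hq2] at h
  have hrk : rk k l n p < rk k l n q := by omega
  rcases lt_trichotomy (g n p) (g n q) with h' | h' | h'
  · exact h'
  · exfalso
    have hn1 : 1 ≤ n := by omega
    have heq : p = q := g_inj n p q (lt_of_le_of_lt hpn (Nat.lt_two_pow_self (n := n)))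
      (lt_of_le_of_lt hqn (Nat.lt_two_pow_self (n := n))) h'
    subst heq
    omega
  · exact absurd (rk_strict hq h') (by omega)

lemma M_no3_inc {q d : ℕ} (hq1 : q ∈ MS k l n) (hq2 : q + d ∈ MS k l n)
    (hq3 : q + 2*d ∈ MS k l n) (hd : 0 < d) :
    ¬(pf k l n q < pf k l n (q+d) ∧ pf k l n (q+d) < pf k l n (q+2*d)) := by
  rintro ⟨ha, hb⟩
  have h1 := g_lt_of_pf_lt hq1 hq2 ha
  have h2 := g_lt_of_pf_lt hq2 hq3 hb
  have hlt : q + 2*d < 2^n := lt_of_le_of_lt (MS_dat hq3).2.1 (Nat.lt_two_pow_self (n := n))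
  have := (g_middle n q d hd hlt).mp h1
  omega

lemma M_no3_dec {q d : ℕ} (hq1 : q ∈ MS k l n) (hq2 : q + d ∈ MS k l n)
    (hq3 : q + 2*d ∈ MS k l n) (hd : 0 < d) :
    ¬(pf k l n (q+d) < pf k l n q ∧ pf k l n (q+2*d) < pf k l n (q+d)) := by
  rintro ⟨ha, hb⟩
  have h1 := g_lt_of_pf_lt hq2 hq1 ha
  have h2 := g_lt_of_pf_lt hq3 hq2 hb
  have hlt : q + 2*d < 2^n := lt_of_le_of_lt (MS_dat hq3).2.1 (Nat.lt_two_pow_self (n := n))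
  have := (g_middle n q d hd hlt).mpr h2
  omega

lemma MS_bound (hk : 5 ≤ k) (hkl : k ≤ l) (hn : 2*l*(k-1) ≤ n) :
    (MS k l n).card + (2*l + 2*k) ≤ n + 4 := by
  obtain ⟨hl, hP, hn2, hklP⟩ := basics hk hkl hn
  set F0 : Finset ℕ := Finset.Icc 1 (l-1) with hF0
  set F4 : Finset ℕ := Finset.Icc (n+2-l) n with hF4
  set F3 : Finset ℕ := (Finset.Icc 1 (k-1)).image (fun j => j * l) with hF3
  set F1 : Finset ℕ := (Finset.Icc 1 (k-1)).image (fun j => n + 1 - j * l) with hF1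
  have c0 : ∀ x ∈ F0, cls k l n x = 0 := by
    intro x hx; obtain ⟨h1, h2⟩ := Finset.mem_Icc.mp hx
    exact cls_zero_of (by omega)
  have c3 : ∀ x ∈ F3, cls k l n x = 3 := by
    intro x hx
    obtain ⟨j, hj, rfl⟩ := Finset.mem_image.mp hx
    obtain ⟨h1, h2⟩ := Finset.mem_Icc.mp hj
    exact cls_three_of hk hkl hn h1 h2 rfl
  have c4 : ∀ x ∈ F4, cls k l n x = 4 := by
    intro x hx; obtain ⟨h1, h2⟩ := Finset.mem_Icc.mp hx
    exact cls_four_of hk hkl hn h2 (by omega)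
  have c1 : ∀ x ∈ F1, cls k l n x = 1 := by
    intro x hx
    obtain ⟨j, hj, rfl⟩ := Finset.mem_image.mp hx
    obtain ⟨h1, h2⟩ := Finset.mem_Icc.mp hj
    have h3 : j * l ≤ (k-1)*l := Nat.mul_le_mul_right l h2
    exact cls_one_of hk hkl hn h1 h2 (by omega)
  have c2 : ∀ x ∈ MS k l n, cls k l n x = 2 := fun x hx => (MS_dat hx).2.2
  have hsub : MS k l n ∪ F0 ∪ F3 ∪ F4 ∪ F1 ⊆ Finset.Icc 1 n := by
    intro x hx
    simp only [Finset.mem_union] at hx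
    rcases hx with (((hx | hx) | hx) | hx) | hx
    · exact (Finset.mem_filter.mp hx).1
    · obtain ⟨h1, h2⟩ := Finset.mem_Icc.mp hx
      exact Finset.mem_Icc.mpr ⟨h1, by omega⟩
    · obtain ⟨j, hj, rfl⟩ := Finset.mem_image.mp hx
      obtain ⟨h1, h2⟩ := Finset.mem_Icc.mp hj
      have h3 : j * l ≤ (k-1)*l := Nat.mul_le_mul_right l h2
      have h4 : l ≤ j * l := Nat.le_mul_of_pos_left l h1
      exact Finset.mem_Icc.mpr ⟨by omega, by omega⟩
    · obtain ⟨h1, h2⟩ := Finset.mem_Icc.mp hx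
      exact Finset.mem_Icc.mpr ⟨by omega, h2⟩
    · obtain ⟨j, hj, rfl⟩ := Finset.mem_image.mp hx
      obtain ⟨h1, h2⟩ := Finset.mem_Icc.mp hj
      have h3 : j * l ≤ (k-1)*l := Nat.mul_le_mul_right l h2
      have h4 : l ≤ j * l := Nat.le_mul_of_pos_left l h1
      exact Finset.mem_Icc.mpr ⟨by omega, by omega⟩
  have disj : ∀ (A B : Finset ℕ) (a b : ℕ), a ≠ b → (∀ x ∈ A, cls k l n x = a) →
      (∀ x ∈ B, cls k l n x = b) → Disjoint A B := by
    intro A B a b hab hA hB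
    rw [Finset.disjoint_left]
    intro x hxA hxB
    exact hab ((hA x hxA).symm.trans (hB x hxB))
  have card0 : F0.card = l - 1 := by rw [hF0, Nat.card_Icc]; omega
  have card4 : F4.card = l - 1 := by rw [hF4, Nat.card_Icc]; omega
  have inj3 : Set.InjOn (fun j => j * l) (Finset.Icc 1 (k-1)) := by
    intro a _ b _ hab
    exact Nat.eq_of_mul_eq_mul_right (by omega) hab
  have inj1 : Set.InjOn (fun j => n + 1 - j * l) (Finset.Icc 1 (k-1)) := by
    intro a ha b hb hab
    simp only [Finset.coe_Icc, Set.mem_Icc] at ha hb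
    have h3 : a * l ≤ (k-1)*l := Nat.mul_le_mul_right l ha.2
    have h4 : b * l ≤ (k-1)*l := Nat.mul_le_mul_right l hb.2
    simp only at hab
    have : a * l = b * l := by omega
    exact Nat.eq_of_mul_eq_mul_right (by omega) this
  have card3 : F3.card = k - 1 := by
    rw [hF3, Finset.card_image_of_injOn inj3, Nat.card_Icc]; omega
  have card1 : F1.card = k - 1 := by
    rw [hF1, Finset.card_image_of_injOn inj1, Nat.card_Icc]; omega
  have hcard : (MS k l n ∪ F0 ∪ F3 ∪ F4 ∪ F1).card
      = (MS k l n).card + F0.card + F3.card + F4.card + F1.card := by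
    rw [Finset.card_union_of_disjoint, Finset.card_union_of_disjoint,
      Finset.card_union_of_disjoint, Finset.card_union_of_disjoint]
    · exact disj _ _ 2 0 (by omega) c2 c0
    · rw [Finset.disjoint_union_left]
      exact ⟨disj _ _ 2 3 (by omega) c2 c3, disj _ _ 0 3 (by omega) c0 c3⟩
    · rw [Finset.disjoint_union_left, Finset.disjoint_union_left]
      exact ⟨⟨disj _ _ 2 4 (by omega) c2 c4, disj _ _ 0 4 (by omega) c0 c4⟩,
        disj _ _ 3 4 (by omega) c3 c4⟩
    · rw [Finset.disjoint_union_left, Finset.disjoint_union_left,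
        Finset.disjoint_union_left]
      exact ⟨⟨⟨disj _ _ 2 1 (by omega) c2 c1, disj _ _ 0 1 (by omega) c0 c1⟩,
        disj _ _ 3 1 (by omega) c3 c1⟩, disj _ _ 4 1 (by omega) c4 c1⟩
  have hle := Finset.card_le_card hsub
  rw [hcard, card0, card3, card4, card1, Nat.card_Icc] at hle
  omega


def lo (k l n : ℕ) : ℕ → ℕ
  | 0 => 1
  | 1 => l
  | 2 => l + k - 1
  | 3 => n + 3 - (k + l)
  | 4 => n + 2 - l
  | _ => 0

def hi (k l n : ℕ) : ℕ → ℕ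
  | 0 => l - 1
  | 1 => l + k - 2
  | 2 => n + 2 - (k + l)
  | 3 => n + 1 - l
  | 4 => n
  | _ => 0

lemma pf_lo_hi (hk : 5 ≤ k) (hkl : k ≤ l) (hn : 2*l*(k-1) ≤ n) (hp : 1 ≤ p) (hpn : p ≤ n) :
    lo k l n (cls k l n p) ≤ pf k l n p ∧ pf k l n p ≤ hi k l n (cls k l n p) := by
  obtain ⟨hl, hP, hn2, hklP⟩ := basics hk hkl hn
  have hc := cls_le_four k l n p
  by_cases e0 : cls k l n p = 0
  · have hd := cls_zero_dat e0
    rw [e0, pf_of0 e0]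
    simp only [lo, hi]
    omega
  by_cases e1 : cls k l n p = 1
  · obtain ⟨j, hj1, hjk, hpj⟩ := cls_one_dat e1
    rw [e1, pf_S hk hkl hn hj1 hjk hpj]
    simp only [lo, hi]
    omega
  by_cases e2 : cls k l n p = 2
  · have hb := MS_bound hk hkl hn
    have hr := rk_lt_card (mem_MS e2 hp hpn)
    rw [e2, pf_of2 e2]
    simp only [lo, hi]
    omega
  by_cases e3 : cls k l n p = 3
  · obtain ⟨j, hj1, hjk, hpj⟩ := cls_three_dat e3
    rw [e3, pf_I hk hkl hn hj1 hjk hpj]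
    simp only [lo, hi]
    omega
  have e4 : cls k l n p = 4 := by omega
  have hd := cls_four_dat e4
  rw [e4, pf_of4 e4]
  simp only [lo, hi]
  omega

lemma hi_lt_lo (hk : 5 ≤ k) (hkl : k ≤ l) (hn : 2*l*(k-1) ≤ n)
    {c c' : ℕ} (h1 : c < c') (h2 : c' ≤ 4) : hi k l n c < lo k l n c' := by
  obtain ⟨hl, hP, hn2, hklP⟩ := basics hk hkl hn
  have h0 : c ≤ 3 := by omega
  interval_cases c <;> interval_cases c' <;> simp only [lo, hi] <;> omega

lemma cls_le_of_pf_lt {q : ℕ} (hk : 5 ≤ k) (hkl : k ≤ l) (hn : 2*l*(k-1) ≤ n)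
    (hp : 1 ≤ p) (hpn : p ≤ n) (hq : 1 ≤ q) (hqn : q ≤ n)
    (h : pf k l n p < pf k l n q) : cls k l n p ≤ cls k l n q := by
  by_contra hcon
  have hlt : cls k l n q < cls k l n p := by omega
  have h1 := pf_lo_hi hk hkl hn hp hpn
  have h2 := pf_lo_hi hk hkl hn hq hqn
  have h3 := hi_lt_lo hk hkl hn hlt (cls_le_four k l n p)
  omega

lemma pf_perm (hk : 5 ≤ k) (hkl : k ≤ l) (hn : 2*l*(k-1) ≤ n) :
    IsPermutation n (pf k l n) := by
  obtain ⟨hl, hP, hn2, hklP⟩ := basics hk hkl hn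
  have hbounds : ∀ p, 1 ≤ p → p ≤ n → 1 ≤ pf k l n p ∧ pf k l n p ≤ n := by
    intro p hp hpn
    have h1 := pf_lo_hi hk hkl hn hp hpn
    have hc := cls_le_four k l n p
    have hlo : 1 ≤ lo k l n (cls k l n p) ∧ hi k l n (cls k l n p) ≤ n := by
      set c := cls k l n p
      interval_cases c <;> simp only [lo, hi] <;> omega
    omega
  have hinj : ∀ p q, 1 ≤ p → p ≤ n → 1 ≤ q → q ≤ n → pf k l n p = pf k l n q → p = q := by
    intro p q hp hpn hq hqn hpf
    have hcls : cls k l n p = cls k l n q := by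
      rcases lt_trichotomy (cls k l n p) (cls k l n q) with hc | hc | hc
      · have h1 := pf_lo_hi hk hkl hn hp hpn
        have h2 := pf_lo_hi hk hkl hn hq hqn
        have h3 := hi_lt_lo hk hkl hn hc (cls_le_four k l n q)
        omega
      · exact hc
      · have h1 := pf_lo_hi hk hkl hn hp hpn
        have h2 := pf_lo_hi hk hkl hn hq hqn
        have h3 := hi_lt_lo hk hkl hn hc (cls_le_four k l n p)
        omega
    by_cases e0 : cls k l n p = 0
    · have f0 := e0; have g0 : cls k l n q = 0 := by omega
      have d1 := cls_zero_dat e0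
      have d2 := cls_zero_dat g0
      rw [pf_of0 e0, pf_of0 g0] at hpf
      omega
    by_cases e1 : cls k l n p = 1
    · have g1 : cls k l n q = 1 := by omega
      obtain ⟨a, ha1, hak, hpa⟩ := cls_one_dat e1
      obtain ⟨b, hb1, hbk, hqb⟩ := cls_one_dat g1
      rw [pf_S hk hkl hn ha1 hak hpa, pf_S hk hkl hn hb1 hbk hqb] at hpf
      have hab : a = b := by omega
      subst hab
      omega
    by_cases e2 : cls k l n p = 2
    · have g2 : cls k l n q = 2 := by omega
      rw [pf_of2 e2, pf_of2 g2] at hpf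
      have hrk : rk k l n p = rk k l n q := by omega
      rcases lt_trichotomy (g n p) (g n q) with hg | hg | hg
      · exact absurd (rk_strict (mem_MS e2 hp hpn) hg) (by omega)
      · exact g_inj n p q (lt_of_le_of_lt hpn (Nat.lt_two_pow_self (n := n)))
          (lt_of_le_of_lt hqn (Nat.lt_two_pow_self (n := n))) hg
      · exact absurd (rk_strict (mem_MS g2 hq hqn) hg) (by omega)
    by_cases e3 : cls k l n p = 3
    · have g3 : cls k l n q = 3 := by omega
      obtain ⟨a, ha1, hak, hpa⟩ := cls_three_dat e3
      obtain ⟨b, hb1, hbk, hqb⟩ := cls_three_dat g3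
      rw [pf_I hk hkl hn ha1 hak hpa, pf_I hk hkl hn hb1 hbk hqb] at hpf
      have hab : a = b := by omega
      subst hab
      rw [hpa, hqb]
    have e4 : cls k l n p = 4 := by
      have := cls_le_four k l n p
      omega
    have g4 : cls k l n q = 4 := by omega
    have d1 := cls_four_dat e4
    have d2 := cls_four_dat g4
    rw [pf_of4 e4, pf_of4 g4] at hpf
    omega
  refine ⟨fun i h1 h2 => hbounds i h1 h2, fun i j a b c d e => hinj i j a b c d e, ?_⟩
  intro v hv1 hv2
  have hsurj := Finset.surj_on_of_inj_on_of_card_le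
    (s := Finset.Icc 1 n) (t := Finset.Icc 1 n)
    (fun p _ => pf k l n p)
    (fun p hp => by
      obtain ⟨h1, h2⟩ := Finset.mem_Icc.mp hp
      exact Finset.mem_Icc.mpr ⟨(hbounds p h1 h2).1, (hbounds p h1 h2).2⟩)
    (fun p q hp hq hpq => by
      obtain ⟨h1, h2⟩ := Finset.mem_Icc.mp hp
      obtain ⟨h3, h4⟩ := Finset.mem_Icc.mp hq
      exact hinj p q h1 h2 h3 h4 hpq)
    (le_refl _)
  obtain ⟨a, ha, hav⟩ := hsurj v (Finset.mem_Icc.mpr ⟨hv1, hv2⟩)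
  obtain ⟨h1, h2⟩ := Finset.mem_Icc.mp ha
  exact ⟨a, h1, h2, hav.symm⟩


lemma chain_inc {f : ℕ → ℕ} {i d K : ℕ}
    (h : ∀ j, j + 1 < K → f (i + j*d) < f (i + (j+1)*d)) :
    ∀ j1 j2, j1 < j2 → j2 ≤ K - 1 → f (i + j1*d) < f (i + j2*d) := by
  intro j1 j2
  induction j2 with
  | zero => intro h12 _; omega
  | succ m ih =>
    intro h12 h2K
    rcases Nat.lt_or_ge j1 m with hm | hm
    · exact lt_trans (ih hm (by omega)) (h m (by omega))
    · have hjm : j1 = m := by omega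
      subst hjm
      exact h j1 (by omega)

lemma chain_dec {f : ℕ → ℕ} {i d K : ℕ}
    (h : ∀ j, j + 1 < K → f (i + j*d) > f (i + (j+1)*d)) :
    ∀ j1 j2, j1 < j2 → j2 ≤ K - 1 → f (i + j2*d) < f (i + j1*d) := by
  intro j1 j2
  induction j2 with
  | zero => intro h12 _; omega
  | succ m ih =>
    intro h12 h2K
    rcases Nat.lt_or_ge j1 m with hm | hm
    · exact lt_trans (h m (by omega)) (ih hm (by omega))
    · have hjm : j1 = m := by omega
      subst hjm
      exact h j1 (by omega)

section IncAnalysis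

variable {k l n i d : ℕ}

-- shared hypotheses bundled
structure IncCtx (k l n i d : ℕ) : Prop where
  hk : 5 ≤ k
  hkl : k ≤ l
  hn : 2*l*(k-1) ≤ n
  hi1 : 1 ≤ i
  hd1 : 1 ≤ d
  hspan : i + (k-1)*d ≤ n
  hmono : ∀ j, j + 1 < k → pf k l n (i + j*d) < pf k l n (i + (j+1)*d)

namespace IncCtx

lemma posn (ctx : IncCtx k l n i d) : ∀ j, j ≤ k-1 → i + j*d ≤ n := by
  intro j hj
  have := Nat.mul_le_mul_right d hj
  have := ctx.hspan
  omega

lemma posmono (ctx : IncCtx k l n i d) : ∀ j1 j2, j1 ≤ j2 → i + j1*d ≤ i + j2*d := by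
  intro j1 j2 h
  have := Nat.mul_le_mul_right d h
  omega

lemma posstrict (ctx : IncCtx k l n i d) : ∀ j1 j2, j1 < j2 → i + j1*d < i + j2*d := by
  intro j1 j2 h
  have := Nat.mul_le_mul_right d (show j1 + 1 ≤ j2 from h)
  have h2 : (j1 + 1) * d = j1 * d + d := by ring
  have := ctx.hd1
  omega

lemma chain (ctx : IncCtx k l n i d) : ∀ j1 j2, j1 < j2 → j2 ≤ k-1 →
    pf k l n (i + j1*d) < pf k l n (i + j2*d) := chain_inc ctx.hmono

lemma cmono (ctx : IncCtx k l n i d) : ∀ j1 j2, j1 ≤ j2 → j2 ≤ k-1 →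
    cls k l n (i + j1*d) ≤ cls k l n (i + j2*d) := by
  have hi1 := ctx.hi1
  intro j1 j2 h12 h2k
  rcases Nat.eq_or_lt_of_le h12 with rfl | hlt
  · exact le_refl _
  · exact cls_le_of_pf_lt ctx.hk ctx.hkl ctx.hn (by omega) (ctx.posn j1 (by omega))
      (by omega) (ctx.posn j2 h2k) (ctx.chain j1 j2 hlt h2k)

lemma two0 (ctx : IncCtx k l n i d) {a b : ℕ} (hab : a < b) (hbk : b ≤ k-1)
    (ha : cls k l n (i + a*d) = 0) (hb : cls k l n (i + b*d) = 0) : False := by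
  have hk := ctx.hk; have hkl := ctx.hkl; have hnn := ctx.hn
  have hi1 := ctx.hi1; have hd1 := ctx.hd1; have hspan := ctx.hspan
  have hch := ctx.chain a b hab hbk
  have d1 := cls_zero_dat ha
  have d2 := cls_zero_dat hb
  rw [pf_of0 ha, pf_of0 hb] at hch
  have hpos := ctx.posstrict a b hab
  omega

lemma two4 (ctx : IncCtx k l n i d) {a b : ℕ} (hab : a < b) (hbk : b ≤ k-1)
    (ha : cls k l n (i + a*d) = 4) (hb : cls k l n (i + b*d) = 4) : False := by
  have hk := ctx.hk; have hkl := ctx.hkl; have hnn := ctx.hn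
  have hi1 := ctx.hi1; have hd1 := ctx.hd1; have hspan := ctx.hspan
  have hch := ctx.chain a b hab hbk
  have d1 := cls_four_dat ha
  have d2 := cls_four_dat hb
  have hbn := ctx.posn b hbk
  rw [pf_of4 ha, pf_of4 hb] at hch
  have hpos := ctx.posstrict a b hab
  omega

lemma oneSI (ctx : IncCtx k l n i d) {a b : ℕ} (hak : a ≤ k-1) (hbk : b ≤ k-1)
    (ha : cls k l n (i + a*d) = 1) (hb : cls k l n (i + b*d) = 3) : False := by
  have hk := ctx.hk; have hkl := ctx.hkl; have hnn := ctx.hn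
  have hi1 := ctx.hi1; have hd1 := ctx.hd1; have hspan := ctx.hspan
  obtain ⟨hl, hP, hn2, hklP⟩ := basics ctx.hk ctx.hkl ctx.hn
  obtain ⟨ja, hja1, hjak, hjap⟩ := cls_one_dat ha
  obtain ⟨jb, hjb1, hjbk, hjbp⟩ := cls_three_dat hb
  have h1 : ja * l ≤ (k-1)*l := Nat.mul_le_mul_right l hjak
  have h2 : jb * l ≤ (k-1)*l := Nat.mul_le_mul_right l hjbk
  -- a ≠ b since classes differ
  have hab : b < a ∨ a < b := by
    rcases lt_trichotomy a b with h | h | h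
    · exact Or.inr h
    · subst h; omega
    · exact Or.inl h
  rcases hab with h | h
  · -- b < a: value of class 3 is above class 1, contradiction with increasing
    have hch := ctx.chain b a h hak
    rw [pf_S ctx.hk ctx.hkl ctx.hn hja1 hjak hjap,
        pf_I ctx.hk ctx.hkl ctx.hn hjb1 hjbk hjbp] at hch
    omega
  · -- a < b: position of S is right of position of I
    have hpos := ctx.posstrict a b h
    omega

lemma twoS (ctx : IncCtx k l n i d) {a b : ℕ} (hab : a < b) (hbk : b ≤ k-1)
    (ha : cls k l n (i + a*d) = 1) (hb : cls k l n (i + b*d) = 1) : False := by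
  have hk := ctx.hk; have hkl := ctx.hkl; have hnn := ctx.hn
  have hi1 := ctx.hi1; have hd1 := ctx.hd1; have hspan := ctx.hspan
  obtain ⟨hl, hP, hn2, hklP⟩ := basics hk hkl hnn
  have hl0 : 0 < l := by omega
  have hsucc : cls k l n (i + (a+1)*d) = 1 := by
    have h1 := ctx.cmono a (a+1) (by omega) (by omega)
    have h2 := ctx.cmono (a+1) b (by omega) hbk
    omega
  obtain ⟨ja, hja1, hjak, hjap⟩ := cls_one_dat ha
  obtain ⟨jc, hjc1, hjck, hjcp⟩ := cls_one_dat hsucc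
  have hsplit0 : i + (a+1)*d = (i + a*d) + d := by ring
  have hjalt : jc * l < ja * l := by omega
  have hjlt : jc < ja := by
    rcases Nat.lt_or_ge jc ja with h | h
    · exact h
    · exact absurd (Nat.mul_le_mul_right l h) (by omega)
  set e := ja - jc with he
  have he1 : 1 ≤ e := by omega
  have hd : d = e * l := by
    have hsm : e * l = ja * l - jc * l := by rw [he, Nat.sub_mul]
    omega
  have key : ∀ j, j ≤ k-1 → ∃ mj, 1 ≤ mj ∧ (i + j*d) + mj*l = n+1 := by
    intro j hjk'
    have hposj := ctx.posn j hjk'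
    rcases le_or_gt a j with haj | haj
    · have hsplit : i + j*d = (i + a*d) + ((j-a)*e)*l := by
        have h1 : j*d = a*d + (j-a)*d := by
          have hh : j = a + (j-a) := by omega
          calc j*d = (a + (j-a))*d := by rw [← hh]
          _ = a*d + (j-a)*d := Nat.add_mul _ _ _
        have h2 : (j-a)*d = ((j-a)*e)*l := by rw [hd, ← Nat.mul_assoc]
        omega
      have hlt : ((j-a)*e)*l < ja*l := by omega
      have hlt2 : (j-a)*e < ja := by
        rcases Nat.lt_or_ge ((j-a)*e) ja with h | h
        · exact h
        · exact absurd (Nat.mul_le_mul_right l h) (by omega)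
      refine ⟨ja - (j-a)*e, by omega, ?_⟩
      have hsm : (ja - (j-a)*e)*l = ja*l - ((j-a)*e)*l := Nat.sub_mul _ _ _
      omega
    · have hsplit : i + a*d = (i + j*d) + ((a-j)*e)*l := by
        have h1 : a*d = j*d + (a-j)*d := by
          have hh : a = j + (a-j) := by omega
          calc a*d = (j + (a-j))*d := by rw [← hh]
          _ = j*d + (a-j)*d := Nat.add_mul _ _ _
        have h2 : (a-j)*d = ((a-j)*e)*l := by rw [hd, ← Nat.mul_assoc]
        omega
      refine ⟨ja + (a-j)*e, by omega, ?_⟩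
      have hsm : (ja + (a-j)*e)*l = ja*l + ((a-j)*e)*l := Nat.add_mul _ _ _
      omega
  have dich : ∀ j, j ≤ k-1 → cls k l n (i + j*d) = 1 ∨ cls k l n (i + j*d) = 0 := by
    intro j hjk'
    obtain ⟨mj, hm1, hmp⟩ := key j hjk'
    rcases le_or_gt mj (k-1) with hmk | hmk
    · exact Or.inl (cls_one_of hk hkl hnn hm1 hmk hmp)
    · right
      have hmlt : ja * l < mj * l := by
        have h := Nat.mul_le_mul_right l (show ja+1 ≤ mj by omega)
        have h2 : (ja+1)*l = ja*l + l := by rw [Nat.add_mul, one_mul]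
        omega
      have hposlt : i + j*d < i + a*d := by omega
      have hja' : j < a := by
        rcases Nat.lt_or_ge j a with h | h
        · exact h
        · exact absurd (ctx.posmono a j h) (by omega)
      have hcle : cls k l n (i + j*d) ≤ 1 := by
        have := ctx.cmono j a (by omega) (by omega)
        omega
      rcases Nat.eq_or_lt_of_le hcle with hc1 | hc0
      · exfalso
        obtain ⟨mj', hm1', hmk', hmp'⟩ := cls_one_dat hc1
        have hmm : mj' * l = mj * l := by omega
        have : mj' = mj := Nat.eq_of_mul_eq_mul_right hl0 hmm
        omega
      · omega
  by_cases hz : ∃ j0, j0 ≤ k-1 ∧ cls k l n (i + j0*d) = 0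
  · obtain ⟨j0, hj0k, hj0⟩ := hz
    have hC0 : cls k l n (i + 0*d) = 0 := by
      have := ctx.cmono 0 j0 (by omega) hj0k
      omega
    have hrest : ∀ j, 1 ≤ j → j ≤ k-1 → cls k l n (i + j*d) = 1 := by
      intro j h1j hjk'
      rcases dich j hjk' with h | h
      · exact h
      · exact (ctx.two0 (show 0 < j by omega) hjk' hC0 h).elim
    have claim : ∀ s, s ≤ k-2 → ∀ ms, (i + (k-1-s)*d) + ms*l = n+1 → 1 + s*e ≤ ms := by
      intro s
      induction s with
      | zero =>
        intro _ ms hms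
        simp only [Nat.sub_zero] at hms
        have hposk := ctx.posn (k-1) (le_refl _)
        rcases Nat.eq_zero_or_pos ms with rfl | h
        · simp at hms; omega
        · omega
      | succ s ih =>
        intro hs ms hms
        have hCj1 : cls k l n (i + (k-1-s)*d) = 1 := hrest (k-1-s) (by omega) (by omega)
        obtain ⟨m2, hm21, hm2k, hm2p⟩ := cls_one_dat hCj1
        have hstep : (k-1-s)*d = (k-1-(s+1))*d + d := by
          have hh : k-1-s = (k-1-(s+1)) + 1 := by omega
          rw [hh, Nat.add_mul, one_mul]
        have h1 : ms * l = m2 * l + e * l := by omega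
        have h2 : (m2 + e) * l = m2*l + e*l := Nat.add_mul _ _ _
        have h3 : ms = m2 + e := Nat.eq_of_mul_eq_mul_right hl0 (by omega)
        have h4 := ih (by omega) m2 hm2p
        have h5 : (s+1)*e = s*e + e := Nat.succ_mul _ _
        omega
    have hC1 : cls k l n (i + 1*d) = 1 := hrest 1 (by omega) (by omega)
    obtain ⟨m1, hm11, hm1k, hm1p⟩ := cls_one_dat hC1
    have hm1ge : 1 + (k-2)*e ≤ m1 := by
      have hh : k-1-(k-2) = 1 := by omega
      apply claim (k-2) (le_refl _)
      rw [hh]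
      exact hm1p
    have he2 : e = 1 := by
      rcases Nat.lt_or_ge e 2 with h | h
      · omega
      · exfalso
        have h2 : (k-2)*2 ≤ (k-2)*e := Nat.mul_le_mul_left _ h
        omega
    have hke : (k-2)*e = k-2 := by rw [he2, Nat.mul_one]
    have hm1eq : m1 = k-1 := by omega
    have hd' : d = l := by rw [hd, he2, one_mul]
    have hsplit1 : i + 1*d = (i + 0*d) + d := by ring
    have hz0 := cls_zero_dat hC0
    have h1 : m1 * l = (k-1) * l := by rw [hm1eq]
    omega
  · push_neg at hz
    have hall : ∀ j, j < k → cls k l n (i + j*d) = 1 := by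
      intro j hj
      rcases dich j (by omega) with h | h
      · exact h
      · exact absurd h (hz j (by omega))
    have hcard : (Finset.range k).card ≤
        ((Finset.Icc 1 (k-1)).image (fun jj => n + 1 - jj * l)).card := by
      apply Finset.card_le_card_of_injOn (fun j => i + j*d)
      · intro j hj
        simp only [Finset.mem_coe, Finset.mem_range] at hj
        obtain ⟨mj, hm1, hmk, hmp⟩ := cls_one_dat (hall j hj)
        simp only [Finset.mem_coe, Finset.mem_image]
        exact ⟨mj, Finset.mem_Icc.mpr ⟨hm1, hmk⟩, by omega⟩
      · intro x hx y hy hxy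
        simp only at hxy
        have hxy2 : x*d = y*d := by omega
        exact Nat.eq_of_mul_eq_mul_right (by omega) hxy2
    have himg : ((Finset.Icc 1 (k-1)).image (fun jj => n + 1 - jj * l)).card ≤
        (Finset.Icc 1 (k-1)).card := Finset.card_image_le
    rw [Finset.card_range] at hcard
    rw [Nat.card_Icc] at himg
    omega

lemma twoI (ctx : IncCtx k l n i d) {a b : ℕ} (hab : a < b) (hbk : b ≤ k-1)
    (ha : cls k l n (i + a*d) = 3) (hb : cls k l n (i + b*d) = 3) : False := by
  have hk := ctx.hk; have hkl := ctx.hkl; have hnn := ctx.hn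
  have hi1 := ctx.hi1; have hd1 := ctx.hd1; have hspan := ctx.hspan
  obtain ⟨hl, hP, hn2, hklP⟩ := basics hk hkl hnn
  have hl0 : 0 < l := by omega
  have hsucc : cls k l n (i + (a+1)*d) = 3 := by
    have h1 := ctx.cmono a (a+1) (by omega) (by omega)
    have h2 := ctx.cmono (a+1) b (by omega) hbk
    omega
  obtain ⟨ja, hja1, hjak, hjap⟩ := cls_three_dat ha
  obtain ⟨jc, hjc1, hjck, hjcp⟩ := cls_three_dat hsucc
  have hsplit0 : i + (a+1)*d = (i + a*d) + d := by ring
  have hjalt : ja * l < jc * l := by omega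
  have hjlt : ja < jc := by
    rcases Nat.lt_or_ge ja jc with h | h
    · exact h
    · exact absurd (Nat.mul_le_mul_right l h) (by omega)
  set e := jc - ja with he
  have he1 : 1 ≤ e := by omega
  have hd : d = e * l := by
    have hsm : e * l = jc * l - ja * l := by rw [he, Nat.sub_mul]
    omega
  have key : ∀ j, j ≤ k-1 → ∃ mj, 1 ≤ mj ∧ i + j*d = mj*l := by
    intro j hjk'
    have hposj := ctx.posn j hjk'
    rcases le_or_gt a j with haj | haj
    · have hsplit : i + j*d = (i + a*d) + ((j-a)*e)*l := by
        have h1 : j*d = a*d + (j-a)*d := by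
          have hh : j = a + (j-a) := by omega
          calc j*d = (a + (j-a))*d := by rw [← hh]
          _ = a*d + (j-a)*d := Nat.add_mul _ _ _
        have h2 : (j-a)*d = ((j-a)*e)*l := by rw [hd, ← Nat.mul_assoc]
        omega
      refine ⟨ja + (j-a)*e, by omega, ?_⟩
      have hsm : (ja + (j-a)*e)*l = ja*l + ((j-a)*e)*l := Nat.add_mul _ _ _
      omega
    · have hsplit : i + a*d = (i + j*d) + ((a-j)*e)*l := by
        have h1 : a*d = j*d + (a-j)*d := by
          have hh : a = j + (a-j) := by omega
          calc a*d = (j + (a-j))*d := by rw [← hh]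
          _ = j*d + (a-j)*d := Nat.add_mul _ _ _
        have h2 : (a-j)*d = ((a-j)*e)*l := by rw [hd, ← Nat.mul_assoc]
        omega
      have hlt2 : (a-j)*e < ja := by
        rcases Nat.lt_or_ge ((a-j)*e) ja with h | h
        · exact h
        · exact absurd (Nat.mul_le_mul_right l h) (by omega)
      refine ⟨ja - (a-j)*e, by omega, ?_⟩
      have hsm : (ja - (a-j)*e)*l = ja*l - ((a-j)*e)*l := Nat.sub_mul _ _ _
      omega
  have dich : ∀ j, j ≤ k-1 → cls k l n (i + j*d) = 3 ∨ cls k l n (i + j*d) = 4 := by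
    intro j hjk'
    obtain ⟨mj, hm1, hmp⟩ := key j hjk'
    rcases le_or_gt mj (k-1) with hmk | hmk
    · exact Or.inl (cls_three_of hk hkl hnn hm1 hmk hmp)
    · right
      have hmge : k * l ≤ mj * l := Nat.mul_le_mul_right l (by omega)
      have hjal : ja * l ≤ (k-1)*l := Nat.mul_le_mul_right l hjak
      have hposgt : i + a*d < i + j*d := by omega
      have hja' : a < j := by
        rcases Nat.lt_or_ge a j with h | h
        · exact h
        · exact absurd (ctx.posmono j a h) (by omega)
      have hcge : 3 ≤ cls k l n (i + j*d) := by
        have := ctx.cmono a j (by omega) hjk'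
        omega
      have hne : cls k l n (i + j*d) ≠ 3 := by
        intro hc3
        obtain ⟨mj', hm1', hmk', hmp'⟩ := cls_three_dat hc3
        have hmm : mj' * l = mj * l := by omega
        have : mj' = mj := Nat.eq_of_mul_eq_mul_right hl0 hmm
        have h4 : mj' * l ≤ (k-1)*l := Nat.mul_le_mul_right l hmk'
        omega
      have := cls_le_four k l n (i + j*d)
      omega
  by_cases hz : ∃ j0, j0 ≤ k-1 ∧ cls k l n (i + j0*d) = 4
  · obtain ⟨j0, hj0k, hj0⟩ := hz
    have hCk1 : cls k l n (i + (k-1)*d) = 4 := by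
      have h1 := ctx.cmono j0 (k-1) hj0k (le_refl _)
      have h2 := cls_le_four k l n (i + (k-1)*d)
      omega
    have hrest : ∀ j, j ≤ k-2 → cls k l n (i + j*d) = 3 := by
      intro j hjk'
      rcases dich j (by omega) with h | h
      · exact h
      · exact (ctx.two4 (show j < k-1 by omega) (le_refl _) h hCk1).elim
    have claim : ∀ s, s ≤ k-2 → ∀ ms, i + s*d = ms*l → 1 + s*e ≤ ms := by
      intro s
      induction s with
      | zero =>
        intro _ ms hms
        rcases Nat.eq_zero_or_pos ms with rfl | h
        · simp at hms; omega
        · omega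
      | succ s ih =>
        intro hs ms hms
        have hCs : cls k l n (i + s*d) = 3 := hrest s (by omega)
        obtain ⟨m2, hm21, hm2k, hm2p⟩ := cls_three_dat hCs
        have hstep : (s+1)*d = s*d + d := Nat.succ_mul _ _
        have h1 : ms * l = m2 * l + e * l := by omega
        have h2 : (m2 + e) * l = m2*l + e*l := Nat.add_mul _ _ _
        have h3 : ms = m2 + e := Nat.eq_of_mul_eq_mul_right hl0 (by omega)
        have h4 := ih (by omega) m2 hm2p
        have h5 : (s+1)*e = s*e + e := Nat.succ_mul _ _
        omega
    have hCk2 : cls k l n (i + (k-2)*d) = 3 := hrest (k-2) (le_refl _)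
    obtain ⟨m2, hm21, hm2k, hm2p⟩ := cls_three_dat hCk2
    have hm2ge : 1 + (k-2)*e ≤ m2 := claim (k-2) (le_refl _) m2 hm2p
    have he2 : e = 1 := by
      rcases Nat.lt_or_ge e 2 with h | h
      · omega
      · exfalso
        have h2 : (k-2)*2 ≤ (k-2)*e := Nat.mul_le_mul_left _ h
        omega
    have hke : (k-2)*e = k-2 := by rw [he2, Nat.mul_one]
    have hm2eq : m2 = k-1 := by omega
    have hd' : d = l := by rw [hd, he2, one_mul]
    have hstep : (k-1)*d = (k-2)*d + d := by
      have hh : k-1 = (k-2) + 1 := by omega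
      rw [hh, Nat.add_mul, one_mul]
    have hfd := cls_four_dat hCk1
    have h1 : m2 * l = (k-1) * l := by rw [hm2eq]
    omega
  · push_neg at hz
    have hall : ∀ j, j < k → cls k l n (i + j*d) = 3 := by
      intro j hj
      rcases dich j (by omega) with h | h
      · exact h
      · exact absurd h (hz j (by omega))
    have hcard : (Finset.range k).card ≤
        ((Finset.Icc 1 (k-1)).image (fun jj => jj * l)).card := by
      apply Finset.card_le_card_of_injOn (fun j => i + j*d)
      · intro j hj
        simp only [Finset.mem_coe, Finset.mem_range] at hj
        obtain ⟨mj, hm1, hmk, hmp⟩ := cls_three_dat (hall j hj)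
        simp only [Finset.mem_coe, Finset.mem_image]
        exact ⟨mj, Finset.mem_Icc.mpr ⟨hm1, hmk⟩, hmp.symm⟩
      · intro x hx y hy hxy
        simp only at hxy
        have hxy2 : x*d = y*d := by omega
        exact Nat.eq_of_mul_eq_mul_right (by omega) hxy2
    have himg : ((Finset.Icc 1 (k-1)).image (fun jj => jj * l)).card ≤
        (Finset.Icc 1 (k-1)).card := Finset.card_image_le
    rw [Finset.card_range] at hcard
    rw [Nat.card_Icc] at himg
    omega

lemma threeM (ctx : IncCtx k l n i d) {a : ℕ} (h2k : a + 2 ≤ k-1)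
    (h0 : cls k l n (i + a*d) = 2) (h1 : cls k l n (i + (a+1)*d) = 2)
    (h2 : cls k l n (i + (a+2)*d) = 2) : False := by
  have hk := ctx.hk; have hkl := ctx.hkl; have hnn := ctx.hn
  have hi1 := ctx.hi1; have hd1 := ctx.hd1
  have e1 : i + (a+1)*d = (i + a*d) + d := by ring
  have e2 : i + (a+2)*d = (i + a*d) + 2*d := by ring
  have m0 : i + a*d ∈ MS k l n := mem_MS h0 (by omega) (ctx.posn a (by omega))
  have m1 : (i + a*d) + d ∈ MS k l n := by
    rw [← e1]; exact mem_MS h1 (by omega) (ctx.posn (a+1) (by omega))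
  have m2 : (i + a*d) + 2*d ∈ MS k l n := by
    rw [← e2]; exact mem_MS h2 (by omega) (ctx.posn (a+2) h2k)
  have c1 := ctx.chain a (a+1) (by omega) (by omega)
  have c2 := ctx.chain (a+1) (a+2) (by omega) h2k
  rw [e1] at c1 c2
  rw [e2] at c2
  exact M_no3_inc m0 m1 m2 (by omega) ⟨c1, c2⟩


end IncCtx

end IncAnalysis

lemma sort3 {P : ℕ → Prop} {x y z : ℕ}
    (hxy : x ≠ y) (hxz : x ≠ z) (hyz : y ≠ z) (hx : P x) (hy : P y) (hz : P z) :
    ∃ p q r, p < q ∧ q < r ∧ P p ∧ P q ∧ P r := by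
  rcases lt_trichotomy x y with h1 | h1 | h1
  · rcases lt_trichotomy y z with h2 | h2 | h2
    · exact ⟨x, y, z, h1, h2, hx, hy, hz⟩
    · exact absurd h2 hyz
    · rcases lt_trichotomy x z with h3 | h3 | h3
      · exact ⟨x, z, y, h3, h2, hx, hz, hy⟩
      · exact absurd h3 hxz
      · exact ⟨z, x, y, h3, h1, hz, hx, hy⟩
  · exact absurd h1 hxy
  · rcases lt_trichotomy x z with h2 | h2 | h2
    · exact ⟨y, x, z, h1, h2, hy, hx, hz⟩
    · exact absurd h2 hxz
    · rcases lt_trichotomy y z with h3 | h3 | h3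
      · exact ⟨y, z, x, h3, h2, hy, hz, hx⟩
      · exact absurd h3 hyz
      · exact ⟨z, y, x, h3, h1, hz, hy, hx⟩

lemma no_inc (hk : 5 ≤ k) (hkl : k ≤ l) (hn : 2*l*(k-1) ≤ n) :
    ¬ HasArithInc n k (pf k l n) := by
  rintro ⟨i, d, hi1, hd1, hspan, hmono⟩
  have ctx : IncCtx k l n i d := ⟨hk, hkl, hn, hi1, hd1, hspan, hmono⟩
  obtain ⟨hl, hP, hn2, hklP⟩ := basics hk hkl hn
  classical
  set A0 := (Finset.range k).filter (fun j => cls k l n (i + j*d) = 0) with hA0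
  set A13 := (Finset.range k).filter
    (fun j => cls k l n (i + j*d) = 1 ∨ cls k l n (i + j*d) = 3) with hA13
  set A2 := (Finset.range k).filter (fun j => cls k l n (i + j*d) = 2) with hA2
  set A4 := (Finset.range k).filter (fun j => cls k l n (i + j*d) = 4) with hA4
  have cover : Finset.range k ⊆ A0 ∪ A13 ∪ A2 ∪ A4 := by
    intro j hj
    have hc := cls_le_four k l n (i + j*d)
    have hd5 : cls k l n (i + j*d) = 0 ∨ (cls k l n (i + j*d) = 1 ∨ cls k l n (i + j*d) = 3)
        ∨ cls k l n (i + j*d) = 2 ∨ cls k l n (i + j*d) = 4 := by omega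
    simp only [hA0, hA13, hA2, hA4, Finset.mem_union, Finset.mem_filter]
    tauto
  have hA0card : A0.card ≤ 1 := by
    by_contra hcon
    obtain ⟨x, hx, y, hy, hxy⟩ := (Finset.one_lt_card (s := A0)).mp (by omega)
    simp only [hA0, Finset.mem_filter, Finset.mem_range] at hx hy
    rcases Nat.lt_or_ge x y with h | h
    · exact ctx.two0 h (by omega) hx.2 hy.2
    · exact ctx.two0 (show y < x by omega) (by omega) hy.2 hx.2
  have hA4card : A4.card ≤ 1 := by
    by_contra hcon
    obtain ⟨x, hx, y, hy, hxy⟩ := (Finset.one_lt_card (s := A4)).mp (by omega)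
    simp only [hA4, Finset.mem_filter, Finset.mem_range] at hx hy
    rcases Nat.lt_or_ge x y with h | h
    · exact ctx.two4 h (by omega) hx.2 hy.2
    · exact ctx.two4 (show y < x by omega) (by omega) hy.2 hx.2
  have pairSI : ∀ x y, x < y → y ≤ k-1 →
      (cls k l n (i + x*d) = 1 ∨ cls k l n (i + x*d) = 3) →
      (cls k l n (i + y*d) = 1 ∨ cls k l n (i + y*d) = 3) → False := by
    intro x y hxy hyk hx hy
    rcases hx with hx | hx <;> rcases hy with hy | hy
    · exact ctx.twoS hxy hyk hx hy
    · exact ctx.oneSI (by omega) hyk hx hy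
    · have := ctx.cmono x y (by omega) hyk
      omega
    · exact ctx.twoI hxy hyk hx hy
  have hA13card : A13.card ≤ 1 := by
    by_contra hcon
    obtain ⟨x, hx, y, hy, hxy⟩ := (Finset.one_lt_card (s := A13)).mp (by omega)
    simp only [hA13, Finset.mem_filter, Finset.mem_range] at hx hy
    rcases Nat.lt_or_ge x y with h | h
    · exact pairSI x y h (by omega) hx.2 hy.2
    · exact pairSI y x (by omega) (by omega) hy.2 hx.2
  have hA2card : A2.card ≤ 2 := by
    by_contra hcon
    obtain ⟨x, hx, y, hy, z, hz, hxy, hxz, hyz⟩ := (Finset.two_lt_card (s := A2)).mp (by omega)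
    obtain ⟨p, q, r, hpq, hqr, hp, hq, hr⟩ :=
      sort3 (P := fun j => j ∈ A2) hxy hxz hyz hx hy hz
    simp only [hA2, Finset.mem_filter, Finset.mem_range] at hp hq hr
    have hq1 : cls k l n (i + (p+1)*d) = 2 := by
      have u1 := ctx.cmono p (p+1) (by omega) (by omega)
      have u2 := ctx.cmono (p+1) r (by omega) (by omega)
      omega
    have hq2 : cls k l n (i + (p+2)*d) = 2 := by
      have u1 := ctx.cmono p (p+2) (by omega) (by omega)
      have u2 := ctx.cmono (p+2) r (by omega) (by omega)
      omega
    exact ctx.threeM (by omega) hp.2 hq1 hq2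
  have hsum : k ≤ A0.card + A13.card + A2.card + A4.card := by
    have h1 := Finset.card_le_card cover
    have h2 := Finset.card_union_le (A0 ∪ A13 ∪ A2) A4
    have h3 := Finset.card_union_le (A0 ∪ A13) A2
    have h4 := Finset.card_union_le A0 A13
    rw [Finset.card_range] at h1
    omega
  have hk5 : k = 5 := by omega
  subst hk5
  obtain ⟨jD, hjD⟩ := (Finset.card_pos (s := A0)).mp (by omega)
  obtain ⟨jX, hjX⟩ := (Finset.card_pos (s := A13)).mp (by omega)
  obtain ⟨jT, hjT⟩ := (Finset.card_pos (s := A4)).mp (by omega)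
  simp only [hA0, Finset.mem_filter, Finset.mem_range] at hjD
  simp only [hA13, Finset.mem_filter, Finset.mem_range] at hjX
  simp only [hA4, Finset.mem_filter, Finset.mem_range] at hjT
  have hC0 : cls 5 l n (i + 0*d) = 0 := by
    have h1 := ctx.cmono 0 jD (by omega) (by omega)
    omega
  have hC4 : cls 5 l n (i + 4*d) = 4 := by
    have h1 := ctx.cmono jT 4 (by omega) (by omega)
    have h2 := cls_le_four 5 l n (i + 4*d)
    omega
  have hmid : ∀ j, 1 ≤ j → j ≤ 3 → j ≠ jX → cls 5 l n (i + j*d) = 2 := by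
    intro j hj1 hj3 hjne
    have hc := cls_le_four 5 l n (i + j*d)
    have h0 : cls 5 l n (i + j*d) ≠ 0 := by
      intro h
      have hjmem : j ∈ A0 := by
        simp only [hA0, Finset.mem_filter, Finset.mem_range]
        exact ⟨by omega, h⟩
      have h0mem : (0 : ℕ) ∈ A0 := by
        simp only [hA0, Finset.mem_filter, Finset.mem_range]
        exact ⟨by omega, hC0⟩
      have := Finset.card_le_one.mp hA0card _ hjmem _ h0mem
      omega
    have h4 : cls 5 l n (i + j*d) ≠ 4 := by
      intro h
      have hjmem : j ∈ A4 := by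
        simp only [hA4, Finset.mem_filter, Finset.mem_range]
        exact ⟨by omega, h⟩
      have h4mem : (4 : ℕ) ∈ A4 := by
        simp only [hA4, Finset.mem_filter, Finset.mem_range]
        exact ⟨by omega, hC4⟩
      have := Finset.card_le_one.mp hA4card _ hjmem _ h4mem
      omega
    have h13 : ¬(cls 5 l n (i + j*d) = 1 ∨ cls 5 l n (i + j*d) = 3) := by
      intro h
      have hjmem : j ∈ A13 := by
        simp only [hA13, Finset.mem_filter, Finset.mem_range]
        exact ⟨by omega, h⟩
      have hjXmem : jX ∈ A13 := by
        simp only [hA13, Finset.mem_filter, Finset.mem_range]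
        exact ⟨hjX.1, hjX.2⟩
      have := Finset.card_le_one.mp hA13card _ hjmem _ hjXmem
      omega
    omega
  rcases hjX.2 with h1 | h3
  · have hx0 : jX ≠ 0 := by
      intro h; subst h; omega
    have hx4 : jX ≠ 4 := by
      intro h; subst h; omega
    have hjX1 : jX = 1 := by
      by_contra hne
      have hm1 : cls 5 l n (i + 1*d) = 2 := hmid 1 (by omega) (by omega) (by omega)
      have := ctx.cmono 1 jX (by omega) (by omega)
      omega
    subst hjX1
    obtain ⟨ja, hja1, hjak, hjap⟩ := cls_one_dat h1
    have hjal : ja * l ≤ (5-1) * l := Nat.mul_le_mul_right l hjak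
    have hD := cls_zero_dat hC0
    have h40 : (5:ℕ) - 1 = 4 := by norm_num
    rw [h40] at hjal
    omega
  · have hx0 : jX ≠ 0 := by
      intro h; subst h; omega
    have hx4 : jX ≠ 4 := by
      intro h; subst h; omega
    have hjX3 : jX = 3 := by
      by_contra hne
      have hm1 : cls 5 l n (i + 3*d) = 2 := hmid 3 (by omega) (by omega) (by omega)
      have := ctx.cmono jX 3 (by omega) (by omega)
      omega
    subst hjX3
    obtain ⟨jb, hjb1, hjbk, hjbp⟩ := cls_three_dat h3
    have hjbl : jb * l ≤ (5-1) * l := Nat.mul_le_mul_right l hjbk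
    have hT := cls_four_dat hC4
    have h40 : (5:ℕ) - 1 = 4 := by norm_num
    rw [h40] at hjbl
    omega


lemma no_dec (hk : 5 ≤ k) (hkl : k ≤ l) (hn : 2*l*(k-1) ≤ n) :
    ¬ HasArithDec n l (pf k l n) := by
  rintro ⟨i, d, hi1, hd1, hspan, hmono⟩
  obtain ⟨hl, hP, hn2, hklP⟩ := basics hk hkl hn
  have hl0 : 0 < l := by omega
  have posn : ∀ j, j ≤ l-1 → i + j*d ≤ n := by
    intro j hj
    have := Nat.mul_le_mul_right d hj
    omega
  have posstrict : ∀ x y : ℕ, x < y → i + x*d < i + y*d := by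
    intro x y h
    have h1 := Nat.mul_le_mul_right d (show x+1 ≤ y from h)
    have h2 : (x+1)*d = x*d + d := by rw [Nat.add_mul, one_mul]
    omega
  have chain : ∀ j1 j2, j1 < j2 → j2 ≤ l-1 →
      pf k l n (i + j2*d) < pf k l n (i + j1*d) := chain_dec hmono
  have cmono : ∀ j1 j2, j1 ≤ j2 → j2 ≤ l-1 →
      cls k l n (i + j2*d) ≤ cls k l n (i + j1*d) := by
    intro j1 j2 h12 h2l
    rcases Nat.eq_or_lt_of_le h12 with rfl | hlt
    · exact le_refl _
    · exact cls_le_of_pf_lt hk hkl hn (by omega) (posn j2 h2l) (by omega)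
        (posn j1 (by omega)) (chain j1 j2 hlt h2l)
  by_cases hT : ∃ j0, j0 ≤ l-1 ∧ cls k l n (i + j0*d) = 4
  · obtain ⟨j0, hj0l, hj0⟩ := hT
    have hall : ∀ j, j ≤ l-1 → cls k l n (i + j*d) = 4 := by
      intro j hj
      rcases le_or_gt j j0 with h | h
      · have h1 := cmono j j0 h hj0l
        have h2 := cls_le_four k l n (i + j*d)
        omega
      · have hd4 := cls_four_dat hj0
        have hpos := posstrict j0 j h
        exact cls_four_of hk hkl hn (posn j hj) (by omega)
    have hcard : (Finset.range l).card ≤ (Finset.Icc (n+2-l) n).card := by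
      apply Finset.card_le_card_of_injOn (fun j => i + j*d)
      · intro j hj
        simp only [Finset.mem_coe, Finset.mem_range] at hj
        have h4 := cls_four_dat (hall j (by omega))
        beta_reduce
        exact Finset.mem_Icc.mpr ⟨by omega, posn j (by omega)⟩
      · intro x hx y hy hxy
        simp only at hxy
        have hxy2 : x*d = y*d := by omega
        exact Nat.eq_of_mul_eq_mul_right (by omega) hxy2
    rw [Finset.card_range, Nat.card_Icc] at hcard
    omega
  by_cases hD : ∃ j0, j0 ≤ l-1 ∧ cls k l n (i + j0*d) = 0
  · obtain ⟨j0, hj0l, hj0⟩ := hD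
    have hall : ∀ j, j ≤ l-1 → cls k l n (i + j*d) = 0 := by
      intro j hj
      rcases le_or_gt j0 j with h | h
      · have h1 := cmono j0 j h hj
        omega
      · have hd0 := cls_zero_dat hj0
        have hpos := posstrict j j0 h
        exact cls_zero_of (by omega)
    have hcard : (Finset.range l).card ≤ (Finset.Icc 1 (l-1)).card := by
      apply Finset.card_le_card_of_injOn (fun j => i + j*d)
      · intro j hj
        simp only [Finset.mem_coe, Finset.mem_range] at hj
        have h0 := cls_zero_dat (hall j (by omega))
        beta_reduce
        exact Finset.mem_Icc.mpr ⟨by omega, by omega⟩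
      · intro x hx y hy hxy
        simp only at hxy
        have hxy2 : x*d = y*d := by omega
        exact Nat.eq_of_mul_eq_mul_right (by omega) hxy2
    rw [Finset.card_range, Nat.card_Icc] at hcard
    omega
  push_neg at hT hD
  classical
  set B1 := (Finset.range l).filter (fun j => cls k l n (i + j*d) = 1) with hB1
  set B2 := (Finset.range l).filter (fun j => cls k l n (i + j*d) = 2) with hB2
  set B3 := (Finset.range l).filter (fun j => cls k l n (i + j*d) = 3) with hB3
  have cover : Finset.range l ⊆ B1 ∪ B2 ∪ B3 := by
    intro j hj
    have hc := cls_le_four k l n (i + j*d)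
    have hjl : j ≤ l-1 := by
      simp only [Finset.mem_range] at hj
      omega
    have hc0 := hD j hjl
    have hc4 := hT j hjl
    have hd5 : cls k l n (i + j*d) = 1 ∨ cls k l n (i + j*d) = 2 ∨
        cls k l n (i + j*d) = 3 := by omega
    simp only [hB1, hB2, hB3, Finset.mem_union, Finset.mem_filter]
    tauto
  have hB1card : B1.card ≤ 1 := by
    by_contra hcon
    obtain ⟨x, hx, y, hy, hxy⟩ := (Finset.one_lt_card (s := B1)).mp (by omega)
    simp only [hB1, Finset.mem_filter, Finset.mem_range] at hx hy
    have pair : ∀ x y : ℕ, x < y → y ≤ l-1 → cls k l n (i + x*d) = 1 →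
        cls k l n (i + y*d) = 1 → False := by
      intro x y hlt hyl hcx hcy
      obtain ⟨jx, hjx1, hjxk, hjxp⟩ := cls_one_dat hcx
      obtain ⟨jy, hjy1, hjyk, hjyp⟩ := cls_one_dat hcy
      have hpos := posstrict x y hlt
      have hjyx : jy < jx := by
        rcases Nat.lt_or_ge jy jx with h | h
        · exact h
        · have := Nat.mul_le_mul_right l h
          omega
      have hch := chain x y hlt hyl
      rw [pf_S hk hkl hn hjx1 hjxk hjxp, pf_S hk hkl hn hjy1 hjyk hjyp] at hch
      omega
    rcases Nat.lt_or_ge x y with h | h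
    · exact pair x y h (by omega) hx.2 hy.2
    · exact pair y x (by omega) (by omega) hy.2 hx.2
  have hB3card : B3.card ≤ 1 := by
    by_contra hcon
    obtain ⟨x, hx, y, hy, hxy⟩ := (Finset.one_lt_card (s := B3)).mp (by omega)
    simp only [hB3, Finset.mem_filter, Finset.mem_range] at hx hy
    have pair : ∀ x y : ℕ, x < y → y ≤ l-1 → cls k l n (i + x*d) = 3 →
        cls k l n (i + y*d) = 3 → False := by
      intro x y hlt hyl hcx hcy
      obtain ⟨jx, hjx1, hjxk, hjxp⟩ := cls_three_dat hcx
      obtain ⟨jy, hjy1, hjyk, hjyp⟩ := cls_three_dat hcy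
      have hpos := posstrict x y hlt
      have hjyx : jx < jy := by
        rcases Nat.lt_or_ge jx jy with h | h
        · exact h
        · have := Nat.mul_le_mul_right l h
          omega
      have hch := chain x y hlt hyl
      rw [pf_I hk hkl hn hjx1 hjxk hjxp, pf_I hk hkl hn hjy1 hjyk hjyp] at hch
      omega
    rcases Nat.lt_or_ge x y with h | h
    · exact pair x y h (by omega) hx.2 hy.2
    · exact pair y x (by omega) (by omega) hy.2 hx.2
  have hB2card : B2.card ≤ 2 := by
    by_contra hcon
    obtain ⟨x, hx, y, hy, z, hz, hxy, hxz, hyz⟩ := (Finset.two_lt_card (s := B2)).mp (by omega)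
    obtain ⟨p, q, r, hpq, hqr, hp, hq, hr⟩ :=
      sort3 (P := fun j => j ∈ B2) hxy hxz hyz hx hy hz
    simp only [hB2, Finset.mem_filter, Finset.mem_range] at hp hq hr
    have hq1 : cls k l n (i + (p+1)*d) = 2 := by
      have u1 := cmono p (p+1) (by omega) (by omega)
      have u2 := cmono (p+1) r (by omega) (by omega)
      omega
    have hq2 : cls k l n (i + (p+2)*d) = 2 := by
      have u1 := cmono p (p+2) (by omega) (by omega)
      have u2 := cmono (p+2) r (by omega) (by omega)
      omega
    have e1 : i + (p+1)*d = (i + p*d) + d := by ring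
    have e2 : i + (p+2)*d = (i + p*d) + 2*d := by ring
    have m0 : i + p*d ∈ MS k l n := mem_MS hp.2 (by omega) (posn p (by omega))
    have m1 : (i + p*d) + d ∈ MS k l n := by
      rw [← e1]; exact mem_MS hq1 (by omega) (posn (p+1) (by omega))
    have m2 : (i + p*d) + 2*d ∈ MS k l n := by
      rw [← e2]; exact mem_MS hq2 (by omega) (posn (p+2) (by omega))
    have c1 := chain p (p+1) (by omega) (by omega)
    have c2 := chain (p+1) (p+2) (by omega) (by omega)
    rw [e1] at c1 c2
    rw [e2] at c2
    exact M_no3_dec m0 m1 m2 (by omega) ⟨c1, c2⟩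
  have hsum : l ≤ B1.card + B2.card + B3.card := by
    have h1 := Finset.card_le_card cover
    have h2 := Finset.card_union_le (B1 ∪ B2) B3
    have h3 := Finset.card_union_le B1 B2
    rw [Finset.card_range] at h1
    omega
  omega

lemma right_ext (hk : 5 ≤ k) (hkl : k ≤ l) (hn : 2*l*(k-1) ≤ n) :
    ∀ x, 1 ≤ x → x ≤ n + 1 → ¬ AntiMonotone (n + 1) k l (ExtendRight n (pf k l n) x) := by
  obtain ⟨hl, hP, hn2, hklP⟩ := basics hk hkl hn
  rintro x hx1 hxn ⟨hInc, hDec⟩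
  by_cases hx : x + l ≤ n + 2
  · -- decreasing witness: suffix of length l-1 followed by x
    apply hDec
    refine ⟨n+2-l, 1, by omega, by omega, by omega, ?_⟩
    have val : ∀ j', j' + 1 < l →
        ExtendRight n (pf k l n) x (n+2-l + j'*1) = n - j' + 1 := by
      intro j' hj'
      have hp1 : n+2-l + j'*1 ≤ n := by omega
      have hpf : pf k l n (n+2-l + j'*1) = n - l + 2 + (n - (n+2-l + j'*1)) :=
        pf_of4 (cls_four_of hk hkl hn hp1 (by omega))
      have hval : pf k l n (n+2-l + j'*1) = n - j' := by rw [hpf]; omega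
      simp only [ExtendRight]
      rw [if_neg (by omega), if_pos (by omega)]
      omega
    intro j hj
    rcases Nat.lt_or_ge (j+2) l with h2 | h2
    · rw [val j hj, val (j+1) h2]
      omega
    · have hpos2 : n+2-l + (j+1)*1 = n+1 := by omega
      have hlast : ExtendRight n (pf k l n) x (n+1) = x := by simp [ExtendRight]
      rw [val j hj, hpos2, hlast]
      omega
  · -- increasing witness: the S-plant followed by x
    apply hInc
    refine ⟨n+1-(k-1)*l, l, by omega, by omega, by omega, ?_⟩
    have val : ∀ j', j' + 1 < k →
        ExtendRight n (pf k l n) x (n+1-(k-1)*l + j'*l) = l + j' := by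
      intro j' hj'
      have hjl : j'*l ≤ (k-2)*l := Nat.mul_le_mul_right l (by omega)
      have hk2l : (k-2)*l + l = (k-1)*l := by
        have hh : (k-2) + 1 = k-1 := by omega
        rw [← hh, Nat.add_mul, one_mul]
      have hsum : (k-1-j') + j' = k-1 := by omega
      have hml : (k-1-j')*l + j'*l = (k-1)*l := by rw [← Nat.add_mul, hsum]
      have hpos : (n+1-(k-1)*l + j'*l) + (k-1-j')*l = n+1 := by omega
      have hpf := pf_S hk hkl hn (show 1 ≤ k-1-j' by omega) (show k-1-j' ≤ k-1 by omega) hpos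
      have hval : pf k l n (n+1-(k-1)*l + j'*l) = l + j' := by rw [hpf]; omega
      simp only [ExtendRight]
      rw [if_neg (by omega), if_neg (by rw [hval]; omega)]
      exact hval
    intro j hj
    rcases Nat.lt_or_ge (j+2) k with h2 | h2
    · rw [val j hj, val (j+1) h2]
      omega
    · have hpos2 : n+1-(k-1)*l + (j+1)*l = n+1 := by
        have hh : j+1 = k-1 := by omega
        rw [hh]
        omega
      have hlast : ExtendRight n (pf k l n) x (n+1) = x := by simp [ExtendRight]
      rw [val j hj, hpos2, hlast]
      omega

lemma left_ext (hk : 5 ≤ k) (hkl : k ≤ l) (hn : 2*l*(k-1) ≤ n) :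
    ∀ x, 1 ≤ x → x ≤ n + 1 → ¬ AntiMonotone (n + 1) k l (ExtendLeft (pf k l n) x) := by
  obtain ⟨hl, hP, hn2, hklP⟩ := basics hk hkl hn
  rintro x hx1 hxn ⟨hInc, hDec⟩
  by_cases hx : l ≤ x
  · -- decreasing witness: x followed by the D-prefix
    apply hDec
    refine ⟨1, 1, by omega, by omega, by omega, ?_⟩
    have val : ∀ j', 1 ≤ j' → j' + 1 ≤ l →
        ExtendLeft (pf k l n) x (1 + j'*1) = l - j' := by
      intro j' hj1 hj2
      have hval : pf k l n (1 + j'*1 - 1) = l - j' := by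
        have he : 1 + j'*1 - 1 = j' := by omega
        rw [he, pf_of0 (cls_zero_of hj2)]
      simp only [ExtendLeft]
      rw [if_neg (by omega), if_neg (by rw [hval]; omega)]
      exact hval
    intro j hj
    rcases Nat.eq_zero_or_pos j with rfl | hj0
    · have h1 : ExtendLeft (pf k l n) x (1 + 0*1) = x := by
        have he : (1 : ℕ) + 0*1 = 1 := by norm_num
        rw [he]
        simp [ExtendLeft]
      rw [h1, val 1 (by omega) (by omega)]
      omega
    · rw [val j hj0 (by omega), val (j+1) (by omega) (by omega)]
      omega
  · -- increasing witness: x followed by the I-plant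
    apply hInc
    refine ⟨1, l, by omega, by omega, by omega, ?_⟩
    have val : ∀ j', 1 ≤ j' → j' ≤ k-1 →
        ExtendLeft (pf k l n) x (1 + j'*l) = n + 3 - (k+l) + j' := by
      intro j' hj1 hj2
      have hl1 : l ≤ j'*l := Nat.le_mul_of_pos_left l hj1
      have hval : pf k l n (1 + j'*l - 1) = n + 2 - (k+l) + j' := by
        have he : 1 + j'*l - 1 = j'*l := by omega
        rw [he, pf_I hk hkl hn hj1 hj2 rfl]
      simp only [ExtendLeft]
      rw [if_neg (by omega), if_pos (by rw [hval]; omega)]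
      omega
    intro j hj
    rcases Nat.eq_zero_or_pos j with rfl | hj0
    · have h1 : ExtendLeft (pf k l n) x (1 + 0*l) = x := by
        have he : (1 : ℕ) + 0*l = 1 := by simp
        rw [he]
        simp [ExtendLeft]
      rw [h1, val 1 (by omega) (by omega)]
      omega
    · rw [val j hj0 (by omega), val (j+1) (by omega) (by omega)]
      omega

end Main

end BC

/-- For `5 ≤ k ≤ l` and every `n ≥ 2*l*(k-1)`, there is a `(k,l)`-bicrucial
permutation of length `n`. -/
theorem bicrucial_exists_all_lengths (k l n : ℕ) (hk : 5 ≤ k) (hkl : k ≤ l)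
    (hn : 2 * l * (k - 1) ≤ n) :
    ∃ π : ℕ → ℕ, Bicrucial n k l π :=
  ⟨BC.pf k l n, ⟨BC.pf_perm hk hkl hn, ⟨BC.no_inc hk hkl hn, BC.no_dec hk hkl hn⟩,
    BC.right_ext hk hkl hn⟩, BC.left_ext hk hkl hn⟩
end

section
/- Let k, ℓ ≥ 3 be integers and let π = π₁π₂…πₙ be a (k,ℓ)-crucial permutation of length n. Then: (i) there exists an integer a ≥ 1 with (k−1)a ≤ n such that π_{n+1−(k−1)a} < π_{n+1−(k−2)a} < … < π_{n+1−a}; and (ii) there exists an integer b ≥ 1 with (ℓ−1)b ≤ n such that π_{n+1−(ℓ−1)b} > π_{n+1−(ℓ−2)b} > … > π_{n+1−b}. -/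
/-- Every `(k,l)`-crucial permutation of length `n` has an increasing arithmetic
subsequence of length `k-1` ending at the last position, and a decreasing
arithmetic subsequence of length `l-1` ending at the last position. -/
theorem crucial_end_sequences (k l n : ℕ) (hk : 3 ≤ k) (hl : 3 ≤ l) (π : ℕ → ℕ)
    (h : Crucial n k l π) :
    (∃ a, 1 ≤ a ∧ (k - 1) * a ≤ n ∧
      ∀ j, 1 ≤ j → j + 1 < k → π (n + 1 - (j + 1) * a) < π (n + 1 - j * a)) ∧
    (∃ b, 1 ≤ b ∧ (l - 1) * b ≤ n ∧
      ∀ j, 1 ≤ j → j + 1 < l → π (n + 1 - (j + 1) * b) > π (n + 1 - j * b)) := by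
  classical
  obtain ⟨hperm, ham, hext⟩ := h
  have hbound := hperm.1
  constructor
  · -- increasing part: extend by x = n+1
    have hne := hext (n+1) (by omega) (le_refl _)
    set σ := ExtendRight n π (n+1) with hσ
    have hσeq : ∀ p, 1 ≤ p → p ≤ n → σ p = π p := by
      intro p hp1 hpn
      have hb := hbound p hp1 hpn
      simp only [hσ, ExtendRight]
      rw [if_neg (by omega), if_neg (by omega)]
    have hσlast : σ (n+1) = n+1 := by simp [hσ, ExtendRight]
    have hAM : HasArithInc (n+1) k σ ∨ HasArithDec (n+1) l σ := by
      by_contra hc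
      push_neg at hc
      exact hne ⟨hc.1, hc.2⟩
    rcases hAM with hA | hB
    · obtain ⟨i, d, hi, hd, hle, hmono⟩ := hA
      by_cases hcase : i + (k-1)*d ≤ n
      · exfalso
        apply ham.1
        refine ⟨i, d, hi, hd, hcase, ?_⟩
        intro j hj
        have h1 : j * d ≤ (k-1)*d := Nat.mul_le_mul_right d (by omega)
        have h2 : (j+1) * d ≤ (k-1)*d := Nat.mul_le_mul_right d (by omega)
        have hm := hmono j hj
        rwa [hσeq _ (by omega) (by omega), hσeq _ (by omega) (by omega)] at hm
      · have heq : i + (k-1)*d = n+1 := by omega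
        refine ⟨d, hd, by omega, ?_⟩
        intro j hj1 hjk
        have e1 : (k-1)*d = (k-2-j)*d + (j+1)*d := by
          rw [← Nat.add_mul]; congr 1; omega
        have e2 : (k-1-j)*d = (k-2-j)*d + d := by
          rw [← Nat.succ_mul]; congr 1; omega
        have e3 : (j+1)*d = j*d + d := Nat.succ_mul j d
        have hD : 1 ≤ j * d := by
          calc 1 = 1 * 1 := rfl
          _ ≤ j * d := Nat.mul_le_mul hj1 hd
        have p1 : n + 1 - (j+1)*d = i + (k-2-j)*d := by omega
        have p2 : n + 1 - j*d = i + (k-1-j)*d := by omega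
        have hm := hmono (k-2-j) (by omega)
        rw [show (k-2-j) + 1 = k-1-j from by omega] at hm
        rw [hσeq _ (by omega) (by omega), hσeq _ (by omega) (by omega)] at hm
        rw [p1, p2]
        exact hm
    · exfalso
      obtain ⟨i, d, hi, hd, hle, hmono⟩ := hB
      by_cases hcase : i + (l-1)*d ≤ n
      · apply ham.2
        refine ⟨i, d, hi, hd, hcase, ?_⟩
        intro j hj
        have h1 : j * d ≤ (l-1)*d := Nat.mul_le_mul_right d (by omega)
        have h2 : (j+1) * d ≤ (l-1)*d := Nat.mul_le_mul_right d (by omega)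
        have hm := hmono j hj
        rwa [hσeq _ (by omega) (by omega), hσeq _ (by omega) (by omega)] at hm
      · have heq : i + (l-1)*d = n+1 := by omega
        have e2 : (l-1)*d = (l-2)*d + d := by
          rw [← Nat.succ_mul]; congr 1; omega
        have hm := hmono (l-2) (by omega)
        rw [show (l-2) + 1 = l-1 from by omega] at hm
        rw [show i + (l-1)*d = n+1 from heq, hσlast] at hm
        have hb := hbound (i + (l-2)*d) (by omega) (by omega)
        rw [hσeq _ (by omega) (by omega)] at hm
        omega
  · -- decreasing part: extend by x = 1
    have hne := hext 1 (le_refl _) (by omega)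
    set σ := ExtendRight n π 1 with hσ
    have hσeq : ∀ p, 1 ≤ p → p ≤ n → σ p = π p + 1 := by
      intro p hp1 hpn
      have hb := hbound p hp1 hpn
      simp only [hσ, ExtendRight]
      rw [if_neg (by omega), if_pos (by omega)]
    have hσlast : σ (n+1) = 1 := by simp [hσ, ExtendRight]
    have hAM : HasArithInc (n+1) k σ ∨ HasArithDec (n+1) l σ := by
      by_contra hc
      push_neg at hc
      exact hne ⟨hc.1, hc.2⟩
    rcases hAM with hA | hB
    · exfalso
      obtain ⟨i, d, hi, hd, hle, hmono⟩ := hA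
      by_cases hcase : i + (k-1)*d ≤ n
      · apply ham.1
        refine ⟨i, d, hi, hd, hcase, ?_⟩
        intro j hj
        have h1 : j * d ≤ (k-1)*d := Nat.mul_le_mul_right d (by omega)
        have h2 : (j+1) * d ≤ (k-1)*d := Nat.mul_le_mul_right d (by omega)
        have hm := hmono j hj
        rw [hσeq _ (by omega) (by omega), hσeq _ (by omega) (by omega)] at hm
        omega
      · have heq : i + (k-1)*d = n+1 := by omega
        have e2 : (k-1)*d = (k-2)*d + d := by
          rw [← Nat.succ_mul]; congr 1; omega
        have hm := hmono (k-2) (by omega)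
        rw [show (k-2) + 1 = k-1 from by omega] at hm
        rw [show i + (k-1)*d = n+1 from heq, hσlast] at hm
        rw [hσeq _ (by omega) (by omega)] at hm
        omega
    · obtain ⟨i, d, hi, hd, hle, hmono⟩ := hB
      by_cases hcase : i + (l-1)*d ≤ n
      · exfalso
        apply ham.2
        refine ⟨i, d, hi, hd, hcase, ?_⟩
        intro j hj
        have h1 : j * d ≤ (l-1)*d := Nat.mul_le_mul_right d (by omega)
        have h2 : (j+1) * d ≤ (l-1)*d := Nat.mul_le_mul_right d (by omega)
        have hm := hmono j hj
        rw [hσeq _ (by omega) (by omega), hσeq _ (by omega) (by omega)] at hm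
        omega
      · have heq : i + (l-1)*d = n+1 := by omega
        refine ⟨d, hd, by omega, ?_⟩
        intro j hj1 hjl
        have e1 : (l-1)*d = (l-2-j)*d + (j+1)*d := by
          rw [← Nat.add_mul]; congr 1; omega
        have e2 : (l-1-j)*d = (l-2-j)*d + d := by
          rw [← Nat.succ_mul]; congr 1; omega
        have e3 : (j+1)*d = j*d + d := Nat.succ_mul j d
        have hD : 1 ≤ j * d := by
          calc 1 = 1 * 1 := rfl
          _ ≤ j * d := Nat.mul_le_mul hj1 hd
        have p1 : n + 1 - (j+1)*d = i + (l-2-j)*d := by omega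
        have p2 : n + 1 - j*d = i + (l-1-j)*d := by omega
        have hm := hmono (l-2-j) (by omega)
        rw [show (l-2-j) + 1 = l-1-j from by omega] at hm
        rw [hσeq _ (by omega) (by omega), hσeq _ (by omega) (by omega)] at hm
        rw [p1, p2]
        omega
end

section
/- Let k, ℓ ≥ 3 be integers and let π = π₁π₂…πₙ be a (k,ℓ)-crucial permutation of length n. Let A be the set of values π_{n+1−a} over all integers a ≥ 1 with (k−1)a ≤ n such that π_{n+1−(k−1)a} < π_{n+1−(k−2)a} < … < π_{n+1−a}, and let B be the set of values π_{n+1−b} over all integers b ≥ 1 with (ℓ−1)b ≤ n such that π_{n+1−(ℓ−1)b} > π_{n+1−(ℓ−2)b} > … > π_{n+1−b}. Then A and B are nonempty and min A < max B. -/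
lemma ext_inc (n k : ℕ) (hk : 3 ≤ k) (π : ℕ → ℕ) (x : ℕ)
    (hni : ¬ HasArithInc n k π)
    (hinc : HasArithInc (n+1) k (ExtendRight n π x)) :
    ∃ a, 1 ≤ a ∧ (k-1)*a ≤ n ∧
      (∀ j, 1 ≤ j → j + 1 < k → π (n + 1 - (j + 1) * a) < π (n + 1 - j * a)) ∧
      π (n+1-a) < x := by
  obtain ⟨i, d, hi1, hd1, hle, hch⟩ := hinc
  have hval : ∀ p, p ≤ n → ExtendRight n π x p = if x ≤ π p then π p + 1 else π p := by
    intro p hp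
    simp only [ExtendRight, if_neg (by omega : ¬ p = n + 1)]
  have hcmp : ∀ p q, p ≤ n → q ≤ n →
      (ExtendRight n π x p < ExtendRight n π x q ↔ π p < π q) := by
    intro p q hp hq
    rw [hval p hp, hval q hq]
    split_ifs <;> omega
  have hltx : ∀ p, p ≤ n → (ExtendRight n π x p < x ↔ π p < x) := by
    intro p hp; rw [hval p hp]; split_ifs <;> omega
  have hatn1 : ExtendRight n π x (n+1) = x := by simp [ExtendRight]
  rcases Nat.lt_or_ge (i + (k-1)*d) (n+1) with hlt | hge
  · exfalso
    apply hni
    refine ⟨i, d, hi1, hd1, by omega, fun j hj => ?_⟩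
    have hb1 : i + j*d ≤ n := by
      have := Nat.mul_le_mul_right d (show j ≤ k-1 by omega)
      omega
    have hb2 : i + (j+1)*d ≤ n := by
      have := Nat.mul_le_mul_right d (show j+1 ≤ k-1 by omega)
      omega
    exact (hcmp _ _ hb1 hb2).mp (hch j hj)
  · have heq : i + (k-1)*d = n+1 := le_antisymm hle hge
    have hkd : (k-1)*d ≤ n := by omega
    refine ⟨d, hd1, hkd, ?_, ?_⟩
    · intro j hj1 hj2
      have e1 : (k-2-j)*d + (j+1)*d = (k-1)*d := by
        rw [← add_mul]; congr 1; omega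
      have e2 : (k-1-j)*d + j*d = (k-1)*d := by
        rw [← add_mul]; congr 1; omega
      have hjd : 0 < j*d := Nat.mul_pos (by omega) (by omega)
      have hj1d : 0 < (j+1)*d := Nat.mul_pos (by omega) (by omega)
      have q1 : n+1-(j+1)*d = i + (k-2-j)*d := by omega
      have q2 : n+1-j*d = i + (k-1-j)*d := by omega
      have hb1 : i + (k-2-j)*d ≤ n := by omega
      have hb2 : i + (k-1-j)*d ≤ n := by omega
      have hc := hch (k-2-j) (by omega)
      have e3 : k-2-j+1 = k-1-j := by omega
      rw [e3] at hc
      rw [q1, q2]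
      exact (hcmp _ _ hb1 hb2).mp hc
    · have hc := hch (k-2) (by omega)
      have e3 : k-2+1 = k-1 := by omega
      rw [e3, heq, hatn1] at hc
      have e1 : (k-2)*d + 1*d = (k-1)*d := by
        rw [← add_mul, show k-2+1 = k-1 by omega]
      have q1 : n+1-d = i + (k-2)*d := by omega
      have hb1 : i + (k-2)*d ≤ n := by omega
      rw [q1]
      exact (hltx _ hb1).mp hc

lemma ext_dec (n l : ℕ) (hl : 3 ≤ l) (π : ℕ → ℕ) (x : ℕ)
    (hnd : ¬ HasArithDec n l π)
    (hdec : HasArithDec (n+1) l (ExtendRight n π x)) :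
    ∃ b, 1 ≤ b ∧ (l-1)*b ≤ n ∧
      (∀ j, 1 ≤ j → j + 1 < l → π (n + 1 - (j + 1) * b) > π (n + 1 - j * b)) ∧
      x ≤ π (n+1-b) := by
  obtain ⟨i, d, hi1, hd1, hle, hch⟩ := hdec
  have hval : ∀ p, p ≤ n → ExtendRight n π x p = if x ≤ π p then π p + 1 else π p := by
    intro p hp
    simp only [ExtendRight, if_neg (by omega : ¬ p = n + 1)]
  have hcmp : ∀ p q, p ≤ n → q ≤ n →
      (ExtendRight n π x p < ExtendRight n π x q ↔ π p < π q) := by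
    intro p q hp hq
    rw [hval p hp, hval q hq]
    split_ifs <;> omega
  have hgtx : ∀ p, p ≤ n → (x < ExtendRight n π x p ↔ x ≤ π p) := by
    intro p hp; rw [hval p hp]; split_ifs <;> omega
  have hatn1 : ExtendRight n π x (n+1) = x := by simp [ExtendRight]
  rcases Nat.lt_or_ge (i + (l-1)*d) (n+1) with hlt | hge
  · exfalso
    apply hnd
    refine ⟨i, d, hi1, hd1, by omega, fun j hj => ?_⟩
    have hb1 : i + j*d ≤ n := by
      have := Nat.mul_le_mul_right d (show j ≤ l-1 by omega)
      omega
    have hb2 : i + (j+1)*d ≤ n := by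
      have := Nat.mul_le_mul_right d (show j+1 ≤ l-1 by omega)
      omega
    exact (hcmp _ _ hb2 hb1).mp (hch j hj)
  · have heq : i + (l-1)*d = n+1 := le_antisymm hle hge
    have hkd : (l-1)*d ≤ n := by omega
    refine ⟨d, hd1, hkd, ?_, ?_⟩
    · intro j hj1 hj2
      have e1 : (l-2-j)*d + (j+1)*d = (l-1)*d := by
        rw [← add_mul]; congr 1; omega
      have e2 : (l-1-j)*d + j*d = (l-1)*d := by
        rw [← add_mul]; congr 1; omega
      have hjd : 0 < j*d := Nat.mul_pos (by omega) (by omega)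
      have hj1d : 0 < (j+1)*d := Nat.mul_pos (by omega) (by omega)
      have q1 : n+1-(j+1)*d = i + (l-2-j)*d := by omega
      have q2 : n+1-j*d = i + (l-1-j)*d := by omega
      have hb1 : i + (l-2-j)*d ≤ n := by omega
      have hb2 : i + (l-1-j)*d ≤ n := by omega
      have hc := hch (l-2-j) (by omega)
      have e3 : l-2-j+1 = l-1-j := by omega
      rw [e3] at hc
      rw [q1, q2]
      exact (hcmp _ _ hb2 hb1).mp hc
    · have hc := hch (l-2) (by omega)
      have e3 : l-2+1 = l-1 := by omega
      rw [e3, heq, hatn1] at hc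
      have e1 : (l-2)*d + 1*d = (l-1)*d := by
        rw [← add_mul, show l-2+1 = l-1 by omega]
      have q1 : n+1-d = i + (l-2)*d := by omega
      have hb1 : i + (l-2)*d ≤ n := by omega
      rw [q1]
      exact (hgtx _ hb1).mp hc

/-- For a `(k,l)`-crucial permutation `π` of length `n`: the set `A` of final values
of increasing arithmetic subsequences of length `k-1` ending at the last position
and the set `B` of final values of decreasing arithmetic subsequences of length
`l-1` ending at the last position are nonempty, and `min A < max B`. -/
theorem crucial_min_lt_max (k l n : ℕ) (hk : 3 ≤ k) (hl : 3 ≤ l) (π : ℕ → ℕ)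
    (h : Crucial n k l π)
    (A B : Set ℕ)
    (hA : A = {v | ∃ a, 1 ≤ a ∧ (k - 1) * a ≤ n ∧
      (∀ j, 1 ≤ j → j + 1 < k → π (n + 1 - (j + 1) * a) < π (n + 1 - j * a)) ∧
      v = π (n + 1 - a)})
    (hB : B = {v | ∃ b, 1 ≤ b ∧ (l - 1) * b ≤ n ∧
      (∀ j, 1 ≤ j → j + 1 < l → π (n + 1 - (j + 1) * b) > π (n + 1 - j * b)) ∧
      v = π (n + 1 - b)}) :
    A.Nonempty ∧ B.Nonempty ∧ sInf A < sSup B := by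
  obtain ⟨hperm, ⟨hni, hnd⟩, hext⟩ := h
  have key : ∀ x, 1 ≤ x → x ≤ n+1 → (∃ v ∈ A, v < x) ∨ (∃ v ∈ B, x ≤ v) := by
    intro x hx1 hx2
    have hx := hext x hx1 hx2
    rw [AntiMonotone, not_and_or, not_not, not_not] at hx
    rcases hx with hinc | hdec
    · obtain ⟨a, h1, h2, h3, h4⟩ := ext_inc n k hk π x hni hinc
      exact Or.inl ⟨π (n+1-a), by rw [hA]; exact ⟨a, h1, h2, h3, rfl⟩, h4⟩
    · obtain ⟨b, h1, h2, h3, h4⟩ := ext_dec n l hl π x hnd hdec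
      exact Or.inr ⟨π (n+1-b), by rw [hB]; exact ⟨b, h1, h2, h3, rfl⟩, h4⟩
  have hAval : ∀ v ∈ A, 1 ≤ v ∧ v ≤ n := by
    intro v hv
    rw [hA] at hv
    obtain ⟨a, h1, h2, _, h4⟩ := hv
    have ha : a ≤ n := le_trans (Nat.le_mul_of_pos_left a (by omega : 0 < k-1)) h2
    rw [h4]
    exact hperm.1 _ (by omega) (by omega)
  have hBval : ∀ v ∈ B, 1 ≤ v ∧ v ≤ n := by
    intro v hv
    rw [hB] at hv
    obtain ⟨b, h1, h2, _, h4⟩ := hv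
    have hb : b ≤ n := le_trans (Nat.le_mul_of_pos_left b (by omega : 0 < l-1)) h2
    rw [h4]
    exact hperm.1 _ (by omega) (by omega)
  have hAne : A.Nonempty := by
    rcases key (n+1) (by omega) le_rfl with ⟨v, hv, _⟩ | ⟨v, hv, hge⟩
    · exact ⟨v, hv⟩
    · have := hBval v hv; omega
  have hBne : B.Nonempty := by
    rcases key 1 le_rfl (by omega) with ⟨v, hv, hlt⟩ | ⟨v, hv, _⟩
    · have := hAval v hv; omega
    · exact ⟨v, hv⟩
  refine ⟨hAne, hBne, ?_⟩
  by_contra hcon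
  push_neg at hcon
  have hbddB : BddAbove B := ⟨n, fun v hv => (hBval v hv).2⟩
  set α := sInf A with hαdef
  have hα : α ∈ A := Nat.sInf_mem hAne
  have hβ : sSup B ∈ B := Nat.sSup_mem hBne hbddB
  have hx1 : 1 ≤ α := (hAval _ hα).1
  have hx2 : α ≤ n := (hAval _ hα).2
  rcases key (α) hx1 (by omega) with ⟨v, hv, hvlt⟩ | ⟨v, hv, hvge⟩
  · exact absurd (Nat.sInf_le hv) (by omega)
  · have hvle : v ≤ sSup B := le_csSup hbddB hv
    have hveq : v = α := le_antisymm (by omega) hvge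
    rw [hA] at hα
    rw [hB] at hv
    obtain ⟨a, ha1, ha2, ha3, ha4⟩ := hα
    obtain ⟨b, hb1, hb2, hb3, hb4⟩ := hv
    have hpe : π (n+1-a) = π (n+1-b) := by rw [← ha4, ← hb4, hveq]
    have han : a ≤ n := le_trans (Nat.le_mul_of_pos_left a (by omega : 0 < k-1)) ha2
    have hbn : b ≤ n := le_trans (Nat.le_mul_of_pos_left b (by omega : 0 < l-1)) hb2
    have hij := hperm.2.1 (n+1-a) (n+1-b) (by omega) (by omega) (by omega) (by omega) hpe
    have hab : a = b := by omega
    subst hab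
    have h5 := ha3 1 le_rfl (by omega)
    have h6 := hb3 1 le_rfl (by omega)
    exact absurd h6 (lt_asymm h5)
end

section
/- Let k, ℓ ≥ 3 and a, b ≥ 1 be integers, and set P = {a, 2a, …, (k−1)a} and Q = {b, 2b, …, (ℓ−1)b}. If P ∩ Q = ∅, then max((k−1)a, (ℓ−1)b) ≥ max(k,ℓ)·(min(k,ℓ)−1). More precisely: if (k−1)a < (ℓ−1)b then b ≥ k, and if (ℓ−1)b < (k−1)a then a ≥ ℓ. -/
set_option maxHeartbeats 1600000 in
/-- If `P = {a, 2a, …, (k-1)a}` and `Q = {b, 2b, …, (l-1)b}` are disjoint, then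
`max((k-1)a, (l-1)b) ≥ max k l * (min k l - 1)`; more precisely, if
`(k-1)a < (l-1)b` then `b ≥ k`, and if `(l-1)b < (k-1)a` then `a ≥ l`. -/
theorem disjoint_progressions_bound (k l a b : ℕ) (hk : 3 ≤ k) (hl : 3 ≤ l)
    (ha : 1 ≤ a) (hb : 1 ≤ b)
    (hdisj : {x | ∃ j, 1 ≤ j ∧ j ≤ k - 1 ∧ x = j * a} ∩
             {x | ∃ j, 1 ≤ j ∧ j ≤ l - 1 ∧ x = j * b} = (∅ : Set ℕ)) :
    max k l * (min k l - 1) ≤ max ((k - 1) * a) ((l - 1) * b) ∧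
    ((k - 1) * a < (l - 1) * b → k ≤ b) ∧
    ((l - 1) * b < (k - 1) * a → l ≤ a) := by
  have key : ∀ j m, 1 ≤ j → j ≤ k - 1 → 1 ≤ m → m ≤ l - 1 → j * a ≠ m * b := by
    intro j m hj1 hj2 hm1 hm2 he
    have hmem : (j * a) ∈ ({x | ∃ j, 1 ≤ j ∧ j ≤ k - 1 ∧ x = j * a} ∩
        {x | ∃ j, 1 ≤ j ∧ j ≤ l - 1 ∧ x = j * b} : Set ℕ) :=
      ⟨⟨j, hj1, hj2, rfl⟩, ⟨m, hm1, hm2, he⟩⟩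
    rw [hdisj] at hmem
    exact hmem
  obtain ⟨k1, rfl⟩ : ∃ m, k = m + 3 := ⟨k - 3, by omega⟩
  obtain ⟨l1, rfl⟩ : ∃ m, l = m + 3 := ⟨l - 3, by omega⟩
  have ha0 : 0 < a := ha
  have hb0 : 0 < b := hb
  set L := Nat.lcm a b with hL
  have hLpos : 0 < L := Nat.lcm_pos ha0 hb0
  have hda : a ∣ L := Nat.dvd_lcm_left a b
  have hdb : b ∣ L := Nat.dvd_lcm_right a b
  have hea : L / a * a = L := Nat.div_mul_cancel hda
  have heb : L / b * b = L := Nat.div_mul_cancel hdb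
  have hpa : 1 ≤ L / a := Nat.div_pos (Nat.le_of_dvd hLpos hda) ha0
  have hpb : 1 ≤ L / b := Nat.div_pos (Nat.le_of_dvd hLpos hdb) hb0
  have hLab : L ≤ a * b := Nat.le_of_dvd (by positivity) (Nat.lcm_dvd_mul a b)
  have hba : L / a ≤ b := by
    calc L / a ≤ a * b / a := Nat.div_le_div_right hLab
    _ = b := Nat.mul_div_cancel_left b ha0
  have hab : L / b ≤ a := by
    calc L / b ≤ b * a / b := Nat.div_le_div_right (by rwa [Nat.mul_comm])
    _ = a := Nat.mul_div_cancel_left a hb0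
  have hmain : k1 + 3 ≤ L / a ∨ l1 + 3 ≤ L / b := by
    by_contra hc
    push_neg at hc
    exact key (L / a) (L / b) hpa (by omega) hpb (by omega) (by rw [hea, heb])
  have hne : (k1 + 3 - 1) * a ≠ (l1 + 3 - 1) * b :=
    key _ _ (by omega) le_rfl (by omega) le_rfl
  have e1 : k1 + 3 - 1 = k1 + 2 := rfl
  have e2 : l1 + 3 - 1 = l1 + 2 := rfl
  rw [e1, e2] at hne ⊢
  have part2 : (k1 + 2) * a < (l1 + 2) * b → k1 + 3 ≤ b := by
    intro h
    rcases hmain with h' | h'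
    · exact le_trans h' hba
    · have hla : l1 + 3 ≤ a := le_trans h' hab
      by_contra hc
      push_neg at hc
      nlinarith
  have part3 : (l1 + 2) * b < (k1 + 2) * a → l1 + 3 ≤ a := by
    intro h
    rcases hmain with h' | h'
    · have hka : k1 + 3 ≤ b := le_trans h' hba
      by_contra hc
      push_neg at hc
      nlinarith
    · exact le_trans h' hab
  refine ⟨?_, part2, part3⟩
  rcases Nat.lt_or_ge ((k1 + 2) * a) ((l1 + 2) * b) with h | h
  · have hkb := part2 h
    have h1 : max (k1 + 3) (l1 + 3) * (min (k1 + 3) (l1 + 3) - 1) ≤ (l1 + 2) * b := by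
      rcases le_total (k1 + 3) (l1 + 3) with hkl | hkl
      · rw [max_eq_right hkl, min_eq_left hkl, e1]
        nlinarith [Nat.mul_le_mul_left (l1 + 2) hkb]
      · rw [max_eq_left hkl, min_eq_right hkl, e2]
        nlinarith [Nat.mul_le_mul_left (l1 + 2) hkb]
    exact le_trans h1 (le_max_right _ _)
  · have h' : (l1 + 2) * b < (k1 + 2) * a := lt_of_le_of_ne h (Ne.symm hne)
    have hla := part3 h'
    have h1 : max (k1 + 3) (l1 + 3) * (min (k1 + 3) (l1 + 3) - 1) ≤ (k1 + 2) * a := by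
      rcases le_total (k1 + 3) (l1 + 3) with hkl | hkl
      · rw [max_eq_right hkl, min_eq_left hkl, e1]
        nlinarith [Nat.mul_le_mul_left (k1 + 2) hla]
      · rw [max_eq_left hkl, min_eq_right hkl, e2]
        nlinarith [Nat.mul_le_mul_left (k1 + 2) hla]
    exact le_trans h1 (le_max_left _ _)
end
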